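/- arXiv:1610.05416 — 13 statements merged into one kernel-verified Lean document; each statement's English description precedes it below -/
import Mathlib

section
/- Let S_1, ..., S_n be arbitrary subsets of ℝ^m. For every point z in the convex hull of the Minkowski sum S_1 + ... + S_n, there exist points z^i ∈ conv S_i for i = 1,...,n such that z = z^1 + ... + z^n and z^i ∈ S_i for all but at most m indices i. -/
/-- The Minkowski sum `S 0 + S 1 + ... + S (n-1)` of a family of sets. -/
def minkSum {E : Type*} [AddCommMonoid E] {n : ℕ} (S : Fin n → Set E) : Set E :=
  {x | ∃ w : Fin n → E, (∀ i, w i ∈ S i) ∧ x = ∑ i, w i}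

open Finset Pointwise

/-- Conic Carathéodory: a nonnegative combination can be rewritten as a nonnegative
combination over a subfamily which is linearly independent. -/
lemma conic_caratheodory {ι E : Type*} [AddCommGroup E] [Module ℝ E]
    (v : ι → E) :
    ∀ (t : Finset ι) (c : ι → ℝ), (∀ p ∈ t, 0 < c p) →
    ∃ t' ⊆ t, ∃ c' : ι → ℝ, (∀ p ∈ t', 0 < c' p) ∧
      ∑ p ∈ t', c' p • v p = ∑ p ∈ t, c p • v p ∧
      LinearIndependent ℝ (fun p : t' => v p) := by
  classical
  intro t
  induction t using Finset.strongInduction with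
  | _ t ih =>
    intro c hc
    by_cases hli : LinearIndependent ℝ (fun p : t => v p)
    · exact ⟨t, Finset.Subset.refl t, c, hc, rfl, hli⟩
    · obtain ⟨g, hg0, i₁, hgi₁⟩ := Fintype.not_linearIndependent_iff.1 hli
      -- extend g to ι by zero
      set G : ι → ℝ := fun p => if h : p ∈ t then g ⟨p, h⟩ else 0 with hG
      have hGsum : ∑ p ∈ t, G p • v p = 0 := by
        rw [← Finset.sum_attach t (fun p => G p • v p)]
        rw [← hg0]
        apply Finset.sum_congr rfl
        intro x _
        simp [hG, x.2]
      have key : ∀ G : ι → ℝ, (∑ p ∈ t, G p • v p = 0) → (∃ p ∈ t, 0 < G p) →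
          ∃ t' ⊆ t, ∃ c' : ι → ℝ, (∀ p ∈ t', 0 < c' p) ∧
            ∑ p ∈ t', c' p • v p = ∑ p ∈ t, c p • v p ∧
            LinearIndependent ℝ (fun p : t' => v p) := by
        intro G hGsum hGpos
        set s : Finset ι := t.filter (fun p => 0 < G p) with hs
        have hsne : s.Nonempty := by
          obtain ⟨p, hp, hp'⟩ := hGpos
          exact ⟨p, Finset.mem_filter.2 ⟨hp, hp'⟩⟩
        obtain ⟨i₀, hi₀s, hmin⟩ := s.exists_min_image (fun p => c p / G p) hsne
        have hi₀t : i₀ ∈ t := (Finset.mem_filter.1 hi₀s).1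
        have hGi₀ : 0 < G i₀ := (Finset.mem_filter.1 hi₀s).2
        set k : ι → ℝ := fun p => c p - c i₀ / G i₀ * G p with hk
        have hk0 : k i₀ = 0 := by simp only [hk]; rw [div_mul_cancel₀ _ (ne_of_gt hGi₀), sub_self]
        have hknn : ∀ p ∈ t, 0 ≤ k p := by
          intro p hp
          by_cases hps : p ∈ s
          · have hGp : 0 < G p := (Finset.mem_filter.1 hps).2
            have := hmin p hps
            simp only [hk, sub_nonneg]
            rw [← le_div_iff₀ hGp]
            exact this
          · have hGp : G p ≤ 0 := by
              by_contra h
              exact hps (Finset.mem_filter.2 ⟨hp, lt_of_not_ge h⟩)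
            have h1 : c i₀ / G i₀ * G p ≤ 0 :=
              mul_nonpos_of_nonneg_of_nonpos
                (div_nonneg (le_of_lt (hc i₀ hi₀t)) (le_of_lt hGi₀)) hGp
            have := hc p hp
            simp only [hk, sub_nonneg]
            linarith
        have hksum : ∑ p ∈ t, k p • v p = ∑ p ∈ t, c p • v p := by
          simp only [hk, sub_smul, mul_smul, Finset.sum_sub_distrib, ← Finset.smul_sum,
            hGsum, smul_zero, sub_zero]
        set t'' : Finset ι := t.filter (fun p => 0 < k p) with ht''
        have ht''ss : t'' ⊂ t := by
          refine Finset.ssubset_iff_of_subset (Finset.filter_subset _ _) |>.2 ?_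
          exact ⟨i₀, hi₀t, by simp [ht'', hk0]⟩
        have hsum'' : ∑ p ∈ t'', k p • v p = ∑ p ∈ t, c p • v p := by
          rw [← hksum, ht'']
          apply Finset.sum_filter_of_ne
          intro p hp h
          rcases lt_or_eq_of_le (hknn p hp) with h' | h'
          · exact h'
          · exact absurd (by rw [← h', zero_smul]) h
        obtain ⟨t', ht't'', c', hc', hsum', hli'⟩ :=
          ih t'' ht''ss k (fun p hp => (Finset.mem_filter.1 hp).2)
        exact ⟨t', ht't''.trans (Finset.filter_subset _ _), c', hc',
          by rw [hsum', hsum''], hli'⟩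
      by_cases hpos : ∃ p ∈ t, 0 < G p
      · exact key G hGsum hpos
      · apply key (-G)
        · simpa using hGsum
        · refine ⟨i₁, i₁.2, ?_⟩
          have hGi₁ : G (i₁ : ι) = g i₁ := by simp [hG, i₁.2]
          have : G (i₁ : ι) ≤ 0 := by
            by_contra h
            exact hpos ⟨i₁, i₁.2, lt_of_not_ge h⟩
          have hne : G (i₁ : ι) ≠ 0 := by rw [hGi₁]; exact hgi₁
          simp only [Pi.neg_apply]
          cases' lt_or_eq_of_le this with h h
          · linarith
          · exact absurd h hne

/-- **Shapley–Folkman lemma.** -/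
theorem shapley_folkman (m n : ℕ) (S : Fin n → Set (Fin m → ℝ))
    (z : Fin m → ℝ) (hz : z ∈ convexHull ℝ (minkSum S)) :
    ∃ z' : Fin n → (Fin m → ℝ),
      (∀ i, z' i ∈ convexHull ℝ (S i)) ∧ z = ∑ i, z' i ∧
      ∃ T : Finset (Fin n), T.card ≤ m ∧ ∀ i ∉ T, z' i ∈ S i := by
  classical
  -- Step 1: minkSum S = ∑ i, S i as sets
  have h1 : minkSum S = ∑ i, S i := by
    ext x
    rw [Set.mem_fintype_sum]
    constructor
    · rintro ⟨w, hw, rfl⟩; exact ⟨w, hw, rfl⟩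
    · rintro ⟨w, hw, rfl⟩; exact ⟨w, hw, rfl⟩
  rw [h1, convexHull_sum, Set.mem_fintype_sum] at hz
  obtain ⟨y, hy, hyz⟩ := hz
  -- Step 2: finite representations
  have hrep : ∀ i, ∃ (t : Finset (Fin m → ℝ)) (f : (Fin m → ℝ) → ℝ),
      ↑t ⊆ S i ∧ (∀ x ∈ t, 0 < f x) ∧ ∑ x ∈ t, f x = 1 ∧ ∑ x ∈ t, f x • x = y i := by
    intro i
    have := hy i
    rw [convexHull_eq_union_convexHull_finite_subsets] at this
    simp only [Set.mem_iUnion] at this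
    obtain ⟨t, hts, hyt⟩ := this
    rw [Finset.mem_convexHull'] at hyt
    obtain ⟨w, hw0, hw1, hws⟩ := hyt
    refine ⟨t.filter (fun x => 0 < w x), w, ?_, ?_, ?_, ?_⟩
    · exact fun x hx => hts (Finset.mem_coe.1 (Finset.filter_subset _ _ hx))
    · exact fun x hx => (Finset.mem_filter.1 hx).2
    · rw [Finset.sum_filter_of_ne, hw1]
      intro x hx h
      exact lt_of_le_of_ne (hw0 x hx) (Ne.symm h)
    · rw [Finset.sum_filter_of_ne, hws]
      intro x hx h
      rcases lt_or_eq_of_le (hw0 x hx) with h' | h'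
      · exact h'
      · exact absurd (by rw [← h', zero_smul]) h
  choose t f ht hf hf1 hfs using hrep
  -- Step 3: big index type and the lifted points
  set V : (Σ _ : Fin n, (Fin m → ℝ)) → ((Fin m → ℝ) × (Fin n → ℝ)) :=
    fun p => (p.2, Pi.single p.1 1) with hV
  set c : (Σ _ : Fin n, (Fin m → ℝ)) → ℝ := fun p => f p.1 p.2 with hc
  set T0 : Finset (Σ _ : Fin n, (Fin m → ℝ)) := Finset.univ.sigma t with hT0
  have hcpos : ∀ p ∈ T0, 0 < c p := by
    rintro ⟨i, x⟩ hp
    rw [hT0, Finset.mem_sigma] at hp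
    exact hf i x hp.2
  have hbig : ∑ p ∈ T0, c p • V p = (z, fun _ => 1) := by
    rw [hT0, Finset.sum_sigma]
    apply Prod.ext
    · rw [Prod.fst_sum]
      have hterm : ∀ i ∈ (Finset.univ : Finset (Fin n)),
          (∑ x ∈ t i, c ⟨i, x⟩ • V ⟨i, x⟩).1 = y i := by
        intro i _
        rw [Prod.fst_sum]
        exact hfs i
      rw [Finset.sum_congr rfl hterm, hyz]
    · funext j
      have hstep : ((∑ i, ∑ x ∈ t i, c ⟨i, x⟩ • V ⟨i, x⟩).2) j
          = ∑ i, ∑ x ∈ t i, f i x * (Pi.single i (1 : ℝ) : Fin n → ℝ) j := by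
        rw [Prod.snd_sum, Finset.sum_apply]
        apply Finset.sum_congr rfl; intro i _
        rw [Prod.snd_sum, Finset.sum_apply]
        rfl
      rw [hstep]
      have hterm : ∀ i, ∑ x ∈ t i, f i x * (Pi.single i (1 : ℝ) : Fin n → ℝ) j
          = if i = j then 1 else 0 := by
        intro i
        rcases eq_or_ne i j with h | h
        · subst h; simp [Pi.single_apply]; exact hf1 i
        · simp [Pi.single_apply, Ne.symm h, h]
      simp only [hterm]
      simp
  -- Step 4: apply conic Carathéodory
  obtain ⟨t', ht'T0, c', hc'pos, hsum', hli⟩ := conic_caratheodory V T0 c hcpos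
  rw [hbig] at hsum'
  -- injectivity of V and the cardinality bound
  have hcard : t'.card ≤ m + n := by
    have := hli.fintype_card_le_finrank
    rw [Fintype.card_coe] at this
    simpa using this
  -- the fibers
  set J : Fin n → Finset (Σ _ : Fin n, (Fin m → ℝ)) :=
    fun i => t'.filter (fun p => p.1 = i) with hJ
  have hJsum : ∀ j, ∑ p ∈ J j, c' p = 1 := by
    intro j
    have h2 := congrArg Prod.snd hsum'
    have h3 := congrFun h2 j
    rw [Prod.snd_sum, Finset.sum_apply] at h3
    have h4 : ∀ p ∈ t', (c' p • V p).2 j = if p.1 = j then c' p else 0 := by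
      rintro ⟨i, x⟩ _
      simp only [hV, Prod.smul_mk, Pi.smul_apply, smul_eq_mul, Pi.single_apply]
      rcases eq_or_ne i j with h | h
      · simp [h]
      · simp [h, Ne.symm h]
    rw [Finset.sum_congr rfl h4, ← Finset.sum_filter] at h3
    exact h3
  have hJne : ∀ j, (J j).Nonempty := by
    intro j
    by_contra h
    rw [Finset.not_nonempty_iff_eq_empty] at h
    have := hJsum j
    rw [h, Finset.sum_empty] at this
    norm_num at this
  -- members of t' lie in the right sets
  have hmem : ∀ p ∈ t', p.2 ∈ t p.1 := by
    intro p hp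
    have := ht'T0 hp
    rw [hT0, Finset.mem_sigma] at this
    exact this.2
  -- define z'
  refine ⟨fun i => ∑ p ∈ J i, c' p • p.2, ?_, ?_, ?_⟩
  · intro i
    have : (∑ p ∈ J i, c' p • p.2) ∈ convexHull ℝ (S i) := by
      have := Finset.centerMass_mem_convexHull (J i)
        (w := c') (z := fun p => p.2)
        (fun p hp => le_of_lt (hc'pos p (Finset.filter_subset _ _ hp)))
        (by rw [hJsum i]; norm_num)
        (fun p hp => by
          have hpi : p.1 = i := (Finset.mem_filter.1 hp).2
          have := ht (p.1) (Finset.mem_coe.2 (hmem p (Finset.filter_subset _ _ hp)))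
          rw [hpi] at this
          exact this)
      rwa [Finset.centerMass_eq_of_sum_1 _ _ (hJsum i)] at this
    exact this
  · show z = ∑ i, ∑ p ∈ J i, c' p • p.2
    have h1 := congrArg Prod.fst hsum'
    rw [Prod.fst_sum] at h1
    have h2 : ∀ p ∈ t', (c' p • V p).1 = c' p • p.2 := fun p _ => rfl
    rw [Finset.sum_congr rfl h2] at h1
    have h1' : ∑ p ∈ t', c' p • p.2 = z := h1
    rw [← h1']
    exact (Finset.sum_fiberwise t' (fun p => p.1) (fun p => c' p • p.2)).symm
  · refine ⟨Finset.univ.filter (fun i => 2 ≤ (J i).card), ?_, ?_⟩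
    · -- cardinality bound
      have hcards : ∑ i, (J i).card = t'.card := by
        simp only [hJ, Finset.card_eq_sum_ones]
        exact Finset.sum_fiberwise t' (fun p => p.1) (fun _ => 1)
      by_contra h
      push_neg at h
      have hlb : ∑ i, (J i).card ≥
          ∑ i ∈ Finset.univ.filter (fun i => 2 ≤ (J i).card), (J i).card
          + ∑ i ∈ Finset.univ.filter (fun i => ¬ 2 ≤ (J i).card), (J i).card := by
        rw [Finset.sum_filter_add_sum_filter_not]
      have h2 : ∑ i ∈ Finset.univ.filter (fun i => 2 ≤ (J i).card), (J i).card
          ≥ 2 * (Finset.univ.filter (fun i => 2 ≤ (J i).card)).card := by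
        calc ∑ i ∈ Finset.univ.filter (fun i => 2 ≤ (J i).card), (J i).card
            ≥ ∑ _i ∈ Finset.univ.filter (fun i => 2 ≤ (J i).card), 2 :=
              Finset.sum_le_sum (fun i hi => (Finset.mem_filter.1 hi).2)
          _ = 2 * (Finset.univ.filter (fun i => 2 ≤ (J i).card)).card := by
              rw [Finset.sum_const, smul_eq_mul, mul_comm]
      have h3 : ∑ i ∈ Finset.univ.filter (fun i => ¬ 2 ≤ (J i).card), (J i).card
          ≥ (Finset.univ.filter (fun i => ¬ 2 ≤ (J i).card)).card := by
        calc _ = ∑ _i ∈ Finset.univ.filter (fun i => ¬ 2 ≤ (J i).card), 1 := by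
              simp
          _ ≤ _ := Finset.sum_le_sum (fun i _ =>
              Finset.card_pos.2 (hJne i))
      have h4 : (Finset.univ.filter (fun i => 2 ≤ (J i).card)).card
          + (Finset.univ.filter (fun i => ¬ 2 ≤ (J i).card)).card = n := by
        rw [Finset.card_filter_add_card_filter_not]
        simp
      omega
    · intro i hi
      show (∑ p ∈ J i, c' p • p.2) ∈ S i
      rw [Finset.mem_filter] at hi
      push_neg at hi
      have hcard1 : (J i).card = 1 := by
        have := Finset.card_pos.2 (hJne i)
        have h2 := hi (Finset.mem_univ i)
        omega
      obtain ⟨p₀, hp₀⟩ := Finset.card_eq_one.1 hcard1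
      have hp₀J : p₀ ∈ J i := by rw [hp₀]; exact Finset.mem_singleton_self p₀
      have hcp₀ : c' p₀ = 1 := by
        have := hJsum i
        rw [hp₀, Finset.sum_singleton] at this
        exact this
      have : (∑ p ∈ J i, c' p • p.2) = p₀.2 := by
        rw [hp₀, Finset.sum_singleton, hcp₀, one_smul]
      rw [this]
      have hp₀i : p₀.1 = i := (Finset.mem_filter.1 hp₀J).2
      have := ht p₀.1 (Finset.mem_coe.2 (hmem p₀ (Finset.filter_subset _ _ hp₀J)))
      rwa [hp₀i] at this
end

section
/- Let S_1, ..., S_n be arbitrary subsets of ℝ^m and let z be a k-extreme point of the convex hull of the Minkowski sum S_1 + ... + S_n. Then there exist integers k_1,...,k_n with 1 ≤ k_i ≤ k+1 and k_1 + ... + k_n ≤ k + n, and points z^i belonging to the k_i-th convex hull conv_{k_i} S_i, such that z = z^1 + ... + z^n. -/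
/-- The `k`-th convex hull of `S`: all convex combinations of `k` points of `S`. -/
def convHullK {E : Type*} [AddCommMonoid E] [Module ℝ E] (k : ℕ) (S : Set E) : Set E :=
  {x | ∃ (v : Fin k → E) (α : Fin k → ℝ),
    (∀ j, v j ∈ S) ∧ (∀ j, 0 ≤ α j) ∧ (∑ j, α j) = 1 ∧ x = ∑ j, α j • v j}

/-- `z` is a `k`-extreme point of `C`: `z ∈ C` and there are no `k+1` linearly
independent vectors `d i` with `z ± d i ∈ C`. -/
def IsKExtreme {E : Type*} [AddCommGroup E] [Module ℝ E] (k : ℕ) (C : Set E) (z : E) : Prop :=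
  z ∈ C ∧ ¬ ∃ d : Fin (k + 1) → E, LinearIndependent ℝ d ∧ ∀ i, z + d i ∈ C ∧ z - d i ∈ C

open Finset Pointwise

variable {m n : ℕ}

/-- A flat representation of `z` of total size `N`. -/
def FlatRep (S : Fin n → Set (Fin m → ℝ)) (z : Fin m → ℝ) (N : ℕ) : Prop :=
  ∃ (g : Fin N → Fin n) (v : Fin N → (Fin m → ℝ)) (α : Fin N → ℝ),
    (∀ j, v j ∈ S (g j)) ∧ (∀ j, 0 ≤ α j) ∧
    (∀ i, ∑ j ∈ univ.filter (g · = i), α j = 1) ∧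
    z = ∑ j, α j • v j

lemma minkSum_eq_sum (S : Fin n → Set (Fin m → ℝ)) : minkSum S = ∑ i, S i := by
  ext x
  simp [minkSum, Set.mem_fintype_sum, eq_comm]

lemma hull_minkSum (S : Fin n → Set (Fin m → ℝ)) :
    convexHull ℝ (minkSum S) = minkSum (fun i => convexHull ℝ (S i)) := by
  rw [minkSum_eq_sum, minkSum_eq_sum (fun i => convexHull ℝ (S i)), convexHull_sum]

/-- Any flat representation lies in the convex hull of the Minkowski sum. -/
lemma rep_mem_hull (S : Fin n → Set (Fin m → ℝ)) {N : ℕ}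
    (g : Fin N → Fin n) (v : Fin N → (Fin m → ℝ)) (α : Fin N → ℝ)
    (hv : ∀ j, v j ∈ S (g j)) (hα : ∀ j, 0 ≤ α j)
    (h1 : ∀ i, ∑ j ∈ univ.filter (g · = i), α j = 1) :
    (∑ j, α j • v j) ∈ convexHull ℝ (minkSum S) := by
  rw [hull_minkSum]
  refine ⟨fun i => ∑ j ∈ univ.filter (g · = i), α j • v j, fun i => ?_, ?_⟩
  · refine (convex_convexHull ℝ (S i)).sum_mem (fun j _ => hα j) (h1 i) (fun j hj => ?_)
    have : g j = i := (mem_filter.mp hj).2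
    exact subset_convexHull ℝ (S i) (this ▸ hv j)
  · exact (Finset.sum_fiberwise univ g (fun j => α j • v j)).symm

/-- Dropping a zero coefficient from a flat representation. -/
lemma flatRep_drop (S : Fin n → Set (Fin m → ℝ)) (z : Fin m → ℝ) {N : ℕ}
    (g : Fin N → Fin n) (v : Fin N → (Fin m → ℝ)) (α : Fin N → ℝ)
    (hv : ∀ j, v j ∈ S (g j)) (hα : ∀ j, 0 ≤ α j)
    (h1 : ∀ i, ∑ j ∈ univ.filter (g · = i), α j = 1)
    (hzz : z = ∑ j, α j • v j) (j₀ : Fin N) (h0 : α j₀ = 0) :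
    FlatRep S z (N - 1) := by
  cases N with
  | zero => exact j₀.elim0
  | succ N' =>
    refine ⟨g ∘ j₀.succAbove, v ∘ j₀.succAbove, α ∘ j₀.succAbove,
      fun j => hv _, fun j => hα _, fun i => ?_, ?_⟩
    · have h := h1 i
      rw [Finset.sum_filter] at h ⊢
      rw [Fin.sum_univ_succAbove (fun j => if g j = i then α j else 0) j₀, h0, ite_self,
        zero_add] at h
      exact h
    · rw [hzz, Fin.sum_univ_succAbove (fun j => α j • v j) j₀, h0, zero_smul, zero_add]
      rfl

/-- Existence of a flat representation. -/
lemma exists_flatRep (S : Fin n → Set (Fin m → ℝ)) (z : Fin m → ℝ)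
    (hz : z ∈ convexHull ℝ (minkSum S)) : ∃ N, FlatRep S z N := by
  rw [hull_minkSum] at hz
  obtain ⟨w, hw, rfl⟩ := hz
  choose ι inst wt pt h0 h1 hmem heq using fun i =>
    (mem_convexHull_iff_exists_fintype).1 (hw i)
  letI : ∀ i, Fintype (ι i) := inst
  set γ := (i : Fin n) × ι i
  refine ⟨Fintype.card γ, ?_⟩
  set e : γ ≃ Fin (Fintype.card γ) := Fintype.equivFin γ
  refine ⟨fun j => (e.symm j).1, fun j => pt _ (e.symm j).2, fun j => wt _ (e.symm j).2,
    fun j => hmem _ _, fun j => h0 _ _, fun i => ?_, ?_⟩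
  · rw [Finset.sum_filter]
    rw [Fintype.sum_equiv e.symm (fun j => if (e.symm j).1 = i then wt (e.symm j).1 (e.symm j).2 else 0)
      (fun x : γ => if x.1 = i then wt x.1 x.2 else 0) (fun j => rfl)]
    rw [← Finset.univ_sigma_univ, Finset.sum_sigma]
    have key : ∀ i', (∑ t : ι i', if i' = i then wt i' t else 0)
        = if i' = i then (1:ℝ) else 0 := by
      intro i'
      split_ifs with h
      · subst h; exact h1 i'
      · simp
    refine Eq.trans (Finset.sum_congr rfl fun i' _ => key i') (by simp)
  · rw [Fintype.sum_equiv e.symm (fun j => wt (e.symm j).1 (e.symm j).2 • pt (e.symm j).1 (e.symm j).2)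
      (fun x : γ => wt x.1 x.2 • pt x.1 x.2) (fun j => rfl), ← Finset.univ_sigma_univ, Finset.sum_sigma]
    exact (Finset.sum_congr rfl fun i _ => heq i).symm

/-- **Refined Shapley–Folkman lemma.** -/
theorem refined_shapley_folkman (m n k : ℕ) (S : Fin n → Set (Fin m → ℝ))
    (z : Fin m → ℝ) (hz : IsKExtreme k (convexHull ℝ (minkSum S)) z) :
    ∃ (ks : Fin n → ℕ) (z' : Fin n → (Fin m → ℝ)),
      (∀ i, 1 ≤ ks i ∧ ks i ≤ k + 1) ∧ (∑ i, ks i) ≤ k + n ∧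
      (∀ i, z' i ∈ convHullK (ks i) (S i)) ∧ z = ∑ i, z' i := by
  classical
  have hex : ∃ N, FlatRep S z N := exists_flatRep S z hz.1
  obtain ⟨N, hrep, hmin⟩ : ∃ N, FlatRep S z N ∧ ∀ N' < N, ¬ FlatRep S z N' :=
    ⟨Nat.find hex, Nat.find_spec hex, fun N' h => Nat.find_min hex h⟩
  obtain ⟨g, v, α, hv, hα, h1, hzz⟩ := hrep
  -- all coefficients are positive, by minimality
  have hpos : ∀ j, 0 < α j := by
    intro j
    rcases (hα j).lt_or_eq with h | h
    · exact h
    · exact absurd (flatRep_drop S z g v α hv hα h1 hzz j h.symm)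
        (hmin (N - 1) (by have := j.pos; omega))
  -- key bound : N ≤ k + n
  have hNbound : N ≤ k + n := by
    by_contra hN
    push_neg at hN
    -- the group-sum linear map
    set L : (Fin N → ℝ) →ₗ[ℝ] (Fin n → ℝ) :=
      LinearMap.pi (fun i => ∑ j ∈ univ.filter (g · = i), LinearMap.proj j) with hL
    have hLapply : ∀ (f : Fin N → ℝ) i, L f i = ∑ j ∈ univ.filter (g · = i), f j := by
      intro f i
      simp [hL, LinearMap.pi_apply, LinearMap.sum_apply]
    -- the combination linear map
    set T : (Fin N → ℝ) →ₗ[ℝ] (Fin m → ℝ) :=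
      ∑ j, (LinearMap.proj j : (Fin N → ℝ) →ₗ[ℝ] ℝ).smulRight (v j) with hT
    have hTapply : ∀ f : Fin N → ℝ, T f = ∑ j, f j • v j := by
      intro f; simp [hT, LinearMap.sum_apply]
    set V := LinearMap.ker L with hV
    haveI : Nonempty (Fin N) := Fin.pos_iff_nonempty.mp (by omega)
    have hu : (univ : Finset (Fin N)).Nonempty := univ_nonempty
    by_cases hker : LinearMap.ker (T.comp V.subtype) = ⊥
    · -- injective case: contradict k-extremality
      have hdim : k + 1 ≤ Module.finrank ℝ V := by
        have h2 := LinearMap.finrank_range_add_finrank_ker L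
        have h3 : Module.finrank ℝ (LinearMap.range L) ≤ n :=
          le_trans (Submodule.finrank_le _) (by simp [Module.finrank_pi])
        rw [show Module.finrank ℝ (Fin N → ℝ) = N from Module.finrank_fin_fun ℝ] at h2
        have h4 : Module.finrank ℝ V = Module.finrank ℝ (LinearMap.ker L) := rfl
        omega
      obtain ⟨b, hb⟩ := exists_linearIndependent_of_le_finrank hdim
      set β : Fin (k + 1) → Fin N → ℝ := fun t => (b t : Fin N → ℝ) with hβ
      have hβsum : ∀ t i, ∑ j ∈ univ.filter (g · = i), β t j = 0 := by
        intro t i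
        have : L (β t) = 0 := (b t).2
        rw [← hLapply (β t) i, this]
        rfl
      -- the small scaling factors
      set a : ℝ := univ.inf' hu α with ha_def
      have ha : 0 < a := (Finset.lt_inf'_iff hu).mpr fun j _ => hpos j
      set M : Fin (k + 1) → ℝ := fun t => univ.sup' hu (fun j => |β t j|) with hM
      have hM0 : ∀ t, 0 ≤ M t := fun t =>
        le_trans (abs_nonneg _) (Finset.le_sup' (fun j => |β t j|) (mem_univ (Classical.arbitrary _)))
      set ε : Fin (k + 1) → ℝ := fun t => a / (M t + 1) with hε_def
      have hε : ∀ t, 0 < ε t := fun t => div_pos ha (by have := hM0 t; linarith)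
      have hbound : ∀ t j, |ε t * β t j| ≤ α j := by
        intro t j
        rw [abs_mul, abs_of_pos (hε t)]
        calc ε t * |β t j| ≤ ε t * (M t + 1) := by
              refine mul_le_mul_of_nonneg_left ?_ (hε t).le
              have := Finset.le_sup' (fun j => |β t j|) (mem_univ j)
              change |β t j| ≤ M t at this
              linarith
          _ = a := div_mul_cancel₀ a (by have := hM0 t; linarith)
          _ ≤ α j := Finset.inf'_le _ (mem_univ j)
      -- membership of perturbed points
      have hmem1 : ∀ (t : Fin (k + 1)) (s : ℝ), (∀ j, 0 ≤ α j + s * β t j) →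
          z + s • T (β t) ∈ convexHull ℝ (minkSum S) := by
        intro t s hs
        have hrw : z + s • T (β t) = ∑ j, (α j + s * β t j) • v j := by
          rw [hzz, hTapply, Finset.smul_sum, ← Finset.sum_add_distrib]
          exact Finset.sum_congr rfl fun j _ => by rw [smul_smul, ← add_smul]
        rw [hrw]
        refine rep_mem_hull S g v _ hv hs fun i => ?_
        rw [Finset.sum_add_distrib, h1 i, ← Finset.mul_sum, hβsum t i, mul_zero, add_zero]
      -- linear independence of the perturbation directions
      have hTb : LinearIndependent ℝ (fun t => (T.comp V.subtype) (b t)) :=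
        hb.map' (T.comp V.subtype) hker
      set w : Fin (k + 1) → ℝˣ := fun t => Units.mk0 (ε t) (hε t).ne' with hw
      have hd : LinearIndependent ℝ (fun t => ε t • T (β t)) := by
        have h5 := hTb.units_smul w
        convert h5 using 1
        funext t
        rfl
      refine hz.2 ⟨fun t => ε t • T (β t), hd, fun t => ⟨?_, ?_⟩⟩
      · refine hmem1 t (ε t) fun j => ?_
        have h2 := abs_le.mp (hbound t j)
        linarith [h2.1, h2.2]
      · rw [sub_eq_add_neg, ← neg_smul]
        refine hmem1 t (-ε t) fun j => ?_
        have h2 := abs_le.mp (hbound t j)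
        linarith [h2.1, h2.2]
    · -- non-injective case: contradict minimality
      obtain ⟨βv, hβv_mem, hβv_ne⟩ := Submodule.exists_mem_ne_zero_of_ne_bot hker
      set β : Fin N → ℝ := (βv : Fin N → ℝ) with hβ
      have hβ0 : β ≠ 0 := fun h => hβv_ne (Subtype.ext h)
      have hTβ : ∑ j, β j • v j = 0 := by
        rw [← hTapply β]
        exact hβv_mem
      have hLβ : ∀ i, ∑ j ∈ univ.filter (g · = i), β j = 0 := by
        intro i
        have : L β = 0 := βv.2
        rw [← hLapply β i, this]
        rfl
      have hneg : ∃ j, β j < 0 := by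
        by_contra h
        push_neg at h
        refine hβ0 (funext fun j => ?_)
        exact (Finset.sum_eq_zero_iff_of_nonneg fun j' _ => h j').mp (hLβ (g j)) j
          (mem_filter.mpr ⟨mem_univ _, rfl⟩)
      obtain ⟨j₂, hj₂⟩ := hneg
      set D : Finset (Fin N) := univ.filter (fun j => β j < 0) with hD_def
      have hD : D.Nonempty := ⟨j₂, mem_filter.mpr ⟨mem_univ _, hj₂⟩⟩
      set t₀ : ℝ := D.inf' hD (fun j => α j / (-β j)) with ht₀_def
      have ht₀ : 0 < t₀ := (Finset.lt_inf'_iff hD).mpr fun j hj =>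
        div_pos (hpos j) (neg_pos.mpr (mem_filter.mp hj).2)
      set α' : Fin N → ℝ := fun j => α j + t₀ * β j with hα'_def
      have hα' : ∀ j, 0 ≤ α' j := by
        intro j
        rcases lt_or_ge (β j) 0 with h | h
        · have hjD : j ∈ D := by simp [hD_def, h]
          have h1' : t₀ ≤ α j / (-β j) := Finset.inf'_le _ hjD
          have h3 : t₀ * (-β j) ≤ α j := by
            calc t₀ * (-β j) ≤ (α j / (-β j)) * (-β j) :=
                  mul_le_mul_of_nonneg_right h1' (by linarith)
              _ = α j := div_mul_cancel₀ _ (by linarith)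
          simp only [hα'_def]
          linarith
        · simp only [hα'_def]
          have := mul_nonneg ht₀.le h
          linarith [hα j]
      obtain ⟨j₁, hj₁D, hj₁⟩ := Finset.exists_mem_eq_inf' hD (fun j => α j / (-β j))
      have hbj : β j₁ < 0 := (mem_filter.mp hj₁D).2
      have hzero : α' j₁ = 0 := by
        have hne : β j₁ ≠ 0 := ne_of_lt hbj
        simp only [hα'_def, ht₀_def, hj₁]
        rw [div_mul_eq_mul_div, mul_div_assoc, div_neg, div_self hne]
        ring
      have h1' : ∀ i, ∑ j ∈ univ.filter (g · = i), α' j = 1 := by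
        intro i
        simp only [hα'_def]
        rw [Finset.sum_add_distrib, h1 i, ← Finset.mul_sum, hLβ i, mul_zero, add_zero]
      have hz' : z = ∑ j, α' j • v j := by
        have : ∑ j, α' j • v j = ∑ j, α j • v j + t₀ • ∑ j, β j • v j := by
          rw [Finset.smul_sum, ← Finset.sum_add_distrib]
          exact Finset.sum_congr rfl fun j _ => by rw [smul_smul, ← add_smul]
        rw [this, hTβ, smul_zero, add_zero, hzz]
      exact absurd (flatRep_drop S z g v α' hv hα' h1' hz' j₁ hzero)
        (hmin (N - 1) (by have := j₁.pos; omega))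
  -- conversion to the statement
  refine ⟨fun i => (univ.filter (g · = i)).card,
    fun i => ∑ j ∈ univ.filter (g · = i), α j • v j, ?_, ?_, ?_, ?_⟩
  · intro i
    have hcard1 : 1 ≤ (univ.filter (g · = i)).card := by
      refine Finset.card_pos.mpr (Finset.nonempty_iff_ne_empty.mpr fun he => ?_)
      have := h1 i
      rw [he, Finset.sum_empty] at this
      exact zero_ne_one this
    refine ⟨hcard1, ?_⟩
    have hsumN : ∑ i', (univ.filter (g · = i')).card = N := by
      rw [← Finset.card_eq_sum_card_fiberwise (fun j (_ : j ∈ univ) => mem_univ (g j))]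
      simp
    have hall1 : ∀ i', 1 ≤ (univ.filter (g · = i')).card := by
      intro i'
      refine Finset.card_pos.mpr (Finset.nonempty_iff_ne_empty.mpr fun he => ?_)
      have := h1 i'
      rw [he, Finset.sum_empty] at this
      exact zero_ne_one this
    have herase : (univ.filter (g · = i)).card
        + ∑ x ∈ univ.erase i, (univ.filter (g · = x)).card
        = ∑ i', (univ.filter (g · = i')).card :=
      Finset.add_sum_erase univ (fun i' => (univ.filter (g · = i')).card) (mem_univ i)
    have hcard_erase : (univ.erase i).card = n - 1 := by
      rw [Finset.card_erase_of_mem (mem_univ i)]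
      simp
    have hle : (n - 1 : ℕ) ≤ ∑ x ∈ univ.erase i, (univ.filter (g · = x)).card := by
      rw [← hcard_erase, Finset.card_eq_sum_ones]
      exact Finset.sum_le_sum fun x _ => hall1 x
    have hn1 : 1 ≤ n := Fin.pos i
    show (univ.filter (g · = i)).card ≤ k + 1
    omega
  · have hsumN : ∑ i', (univ.filter (g · = i')).card = N := by
      rw [← Finset.card_eq_sum_card_fiberwise (fun j (_ : j ∈ univ) => mem_univ (g j))]
      simp
    show ∑ i', (univ.filter (g · = i')).card ≤ k + n
    omega
  · intro i
    set F : Finset (Fin N) := univ.filter (g · = i) with hF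
    set e : {x // x ∈ F} ≃ Fin F.card := Fintype.equivFinOfCardEq (Fintype.card_coe F)
    refine ⟨fun t => v (e.symm t), fun t => α (e.symm t), fun t => ?_, fun t => hα _, ?_, ?_⟩
    · have hmem : ((e.symm t : {x // x ∈ F}) : Fin N) ∈ univ.filter (g · = i) := (e.symm t).2
      have h6 : g ((e.symm t : {x // x ∈ F}) : Fin N) = i := (mem_filter.mp hmem).2
      have h7 := hv ((e.symm t : {x // x ∈ F}) : Fin N)
      rw [h6] at h7
      exact h7
    · rw [Fintype.sum_equiv e.symm (fun t => α (e.symm t)) (fun x : {x // x ∈ F} => α x)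
        (fun t => rfl)]
      rw [Finset.sum_coe_sort F (fun j => α j)]
      exact h1 i
    · rw [Fintype.sum_equiv e.symm (fun t => α (e.symm t) • v (e.symm t))
        (fun x : {x // x ∈ F} => α x • v x) (fun t => rfl)]
      rw [Finset.sum_coe_sort F (fun j => α j • v j)]
  · rw [hzz, ← Finset.sum_fiberwise univ g (fun j => α j • v j)]
end

section
/- Let S_1, ..., S_n be arbitrary subsets of ℝ^m. If z lies in the convex hull of the Minkowski sum S_1 + ... + S_n, then there exist integers k_1,...,k_n with 1 ≤ k_i ≤ m and k_1 + ... + k_n ≤ m - 1 + n, and points z^i in the k_i-th convex hull conv_{k_i} S_i, such that z_s = Σ_{i=1}^n z^i_s for every coordinate s = 1,...,m-1 and z_m ≥ Σ_{i=1}^n z^i_m. -/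
open Finset

namespace RSFaux

variable {m n : ℕ} {ι : Type} [Fintype ι]

noncomputable def supp (α : Fin n → ι → ℝ) (i : Fin n) : Finset ι :=
  Finset.univ.filter (fun t => α i t ≠ 0)

lemma mem_supp {α : Fin n → ι → ℝ} {i : Fin n} {t : ι} : t ∈ supp α i ↔ α i t ≠ 0 := by
  simp [supp]

lemma descend (hm : 0 < m) (v : Fin n → ι → (Fin m → ℝ)) (z : Fin m → ℝ) (last : Fin m) :
    ∀ (N : ℕ) (α : Fin n → ι → ℝ),
      (∑ i, (supp α i).card) ≤ N →
      (∀ i t, 0 ≤ α i t) →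
      (∀ i, ∑ t, α i t = 1) →
      (∀ s : Fin m, (s : ℕ) < m - 1 → z s = ∑ i, ∑ t, α i t * v i t s) →
      (∑ i, ∑ t, α i t * v i t last ≤ z last) →
      ∃ α' : Fin n → ι → ℝ,
        (∀ i t, 0 ≤ α' i t) ∧ (∀ i, ∑ t, α' i t = 1) ∧
        (∀ s : Fin m, (s : ℕ) < m - 1 → z s = ∑ i, ∑ t, α' i t * v i t s) ∧
        (∑ i, ∑ t, α' i t * v i t last ≤ z last) ∧
        (∀ i, supp α' i ⊆ supp α i) ∧
        (∑ i, (supp α' i).card) ≤ n + m - 1 := by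
  intro N
  induction N with
  | zero =>
    intro α hN h0 h1 h2 h3
    exact ⟨α, h0, h1, h2, h3, fun i => Finset.Subset.refl _, le_trans hN (Nat.zero_le _)⟩
  | succ N IH =>
    intro α hN h0 h1 h2 h3
    by_cases hle : (∑ i, (supp α i).card) ≤ n + m - 1
    · exact ⟨α, h0, h1, h2, h3, fun i => Finset.Subset.refl _, hle⟩
    have hcard : n + m - 1 < ∑ i, (supp α i).card := not_le.mp hle
    -- the descent step, given a suitable direction `d`
    have step : ∀ d : Fin n → ι → ℝ,
        (∀ i t, d i t ≠ 0 → α i t ≠ 0) →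
        (∀ i, ∑ t, d i t = 0) →
        (∀ s : Fin m, (s : ℕ) < m - 1 → ∑ i, ∑ t, d i t * v i t s = 0) →
        (∑ i, ∑ t, d i t * v i t last ≤ 0) →
        (∃ i t, d i t < 0) →
        ∃ α' : Fin n → ι → ℝ,
          (∀ i t, 0 ≤ α' i t) ∧ (∀ i, ∑ t, α' i t = 1) ∧
          (∀ s : Fin m, (s : ℕ) < m - 1 → z s = ∑ i, ∑ t, α' i t * v i t s) ∧
          (∑ i, ∑ t, α' i t * v i t last ≤ z last) ∧
          (∀ i, supp α' i ⊆ supp α i) ∧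
          (∑ i, (supp α' i).card) ≤ n + m - 1 := by
      intro d hdsupp hdrow hdcoord hdlast hdneg
      classical
      set F : Finset ((_ : Fin n) × ι) :=
        Finset.univ.filter (fun p => d p.1 p.2 < 0) with hF
      have hFne : F.Nonempty := by
        obtain ⟨i, t, h⟩ := hdneg
        exact ⟨⟨i, t⟩, by simp [hF, h]⟩
      obtain ⟨p, hpF, hpmin⟩ :=
        F.exists_min_image (fun p => α p.1 p.2 / (-(d p.1 p.2))) hFne
      have hdp : d p.1 p.2 < 0 := by simpa [hF] using hpF
      have hap : 0 < α p.1 p.2 :=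
        lt_of_le_of_ne (h0 _ _) (Ne.symm (hdsupp _ _ (ne_of_lt hdp)))
      set θ : ℝ := α p.1 p.2 / (-(d p.1 p.2)) with hθdef
      have hθpos : 0 < θ := div_pos hap (neg_pos.mpr hdp)
      have hθ : ∀ i t, d i t < 0 → θ * (-(d i t)) ≤ α i t := by
        intro i t h
        have h' := hpmin ⟨i, t⟩ (by simp [hF, h])
        rw [le_div_iff₀ (neg_pos.mpr h)] at h'
        exact h'
      set α' : Fin n → ι → ℝ := fun i t => α i t + θ * d i t with hα'
      have expand : ∀ f : Fin n → ι → ℝ,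
          ∑ i, ∑ t, α' i t * f i t
            = (∑ i, ∑ t, α i t * f i t) + θ * ∑ i, ∑ t, d i t * f i t := by
        intro f
        rw [Finset.mul_sum, ← Finset.sum_add_distrib]
        refine Finset.sum_congr rfl fun i _ => ?_
        rw [Finset.mul_sum, ← Finset.sum_add_distrib]
        refine Finset.sum_congr rfl fun t _ => ?_
        simp [hα']; ring
      have h0' : ∀ i t, 0 ≤ α' i t := by
        intro i t
        rcases lt_or_ge (d i t) 0 with h | h
        · have := hθ i t h
          simp only [hα']
          nlinarith
        · exact add_nonneg (h0 i t) (mul_nonneg hθpos.le h)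
      have h1' : ∀ i, ∑ t, α' i t = 1 := by
        intro i
        simp only [hα', Finset.sum_add_distrib, ← Finset.mul_sum, hdrow i, h1 i, mul_zero,
          add_zero]
      have h2' : ∀ s : Fin m, (s : ℕ) < m - 1 → z s = ∑ i, ∑ t, α' i t * v i t s := by
        intro s hs
        rw [expand (fun i t => v i t s), hdcoord s hs, mul_zero, add_zero]
        exact h2 s hs
      have h3' : ∑ i, ∑ t, α' i t * v i t last ≤ z last := by
        rw [expand (fun i t => v i t last)]
        nlinarith [mul_nonpos_of_nonneg_of_nonpos hθpos.le hdlast]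
      have hsub : ∀ i, supp α' i ⊆ supp α i := by
        intro i t ht
        rw [mem_supp] at ht ⊢
        intro h
        apply ht
        have hd : d i t = 0 := by
          by_contra hd
          exact hdsupp i t hd h
        simp [hα', h, hd]
      have hmem : p.2 ∈ supp α p.1 := mem_supp.mpr (hdsupp _ _ (ne_of_lt hdp))
      have hnotmem : p.2 ∉ supp α' p.1 := by
        rw [mem_supp, not_not, hα']
        have hd0 : -(d p.1 p.2) ≠ 0 := ne_of_gt (neg_pos.mpr hdp)
        show α p.1 p.2 + α p.1 p.2 / (-(d p.1 p.2)) * d p.1 p.2 = 0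
        rw [div_neg, neg_mul, div_mul_cancel₀ _ (ne_of_lt hdp), add_neg_cancel]
      have hlt : ∑ i, (supp α' i).card < ∑ i, (supp α i).card := by
        refine Finset.sum_lt_sum (fun i _ => Finset.card_le_card (hsub i))
          ⟨p.1, Finset.mem_univ _, Finset.card_lt_card ?_⟩
        exact (Finset.ssubset_iff_of_subset (hsub p.1)).mpr ⟨p.2, hmem, hnotmem⟩
      obtain ⟨α'', c0, c1, c2, c3, csub, cbound⟩ :=
        IH α' (by omega) h0' h1' h2' h3'
      exact ⟨α'', c0, c1, c2, c3, fun i => (csub i).trans (hsub i), cbound⟩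
    have hdir : ∃ d : Fin n → ι → ℝ,
      (∀ i t, d i t ≠ 0 → t ∈ supp α i) ∧
      (∀ i, ∑ t, d i t = 0) ∧
      (∀ s : Fin m, (s : ℕ) < m - 1 → ∑ i, ∑ t, d i t * v i t s = 0) ∧
      (∃ i t, d i t ≠ 0) := by
      classical
      set J : Finset ((_ : Fin n) × ι) := Finset.univ.sigma (fun i => supp α i) with hJ
      have hJcard : n + m - 1 < J.card := by
        rw [hJ, Finset.card_sigma]
        simpa using hcard
      have hmemJ : ∀ (i : Fin n) (t : ι), (⟨i, t⟩ : (_ : Fin n) × ι) ∈ J ↔ t ∈ supp α i := by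
        intro i t
        simp [hJ, Finset.mem_sigma]
      set U : ((_ : Fin n) × ι) → (Fin n → ℝ) × (Fin (m - 1) → ℝ) :=
        fun p => (Pi.single p.1 (1 : ℝ), fun s => v p.1 p.2 ⟨s.1, lt_of_lt_of_le s.2 (Nat.sub_le m 1)⟩)
        with hU
      have hni : ¬ LinearIndependent ℝ (fun p : J => U p) := by
        intro h
        have hc := h.fintype_card_le_finrank
        rw [Fintype.card_coe] at hc
        have hrk : Module.finrank ℝ ((Fin n → ℝ) × (Fin (m - 1) → ℝ)) = n + (m - 1) := by
          rw [Module.finrank_prod, Module.finrank_fin_fun, Module.finrank_fin_fun]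
        omega
      obtain ⟨g, hg0, p0, hp0⟩ := Fintype.not_linearIndependent_iff.mp hni
      set G : ((_ : Fin n) × ι) → ℝ := fun p => if h : p ∈ J then g ⟨p, h⟩ else 0 with hG
      set d : Fin n → ι → ℝ := fun i t => G ⟨i, t⟩ with hd
      have hGsum : ∑ i, ∑ t, G ⟨i, t⟩ • U ⟨i, t⟩ = (0 : (Fin n → ℝ) × (Fin (m - 1) → ℝ)) := by
        have e1 : ∀ i : Fin n, ∑ t, G ⟨i, t⟩ • U ⟨i, t⟩ = ∑ t ∈ supp α i, G ⟨i, t⟩ • U ⟨i, t⟩ := by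
          intro i
          symm
          apply Finset.sum_subset (Finset.subset_univ _)
          intro t _ ht
          have : (⟨i, t⟩ : (_ : Fin n) × ι) ∉ J := by rw [hmemJ]; exact ht
          simp [hG, this]
        calc ∑ i, ∑ t, G ⟨i, t⟩ • U ⟨i, t⟩
            = ∑ i, ∑ t ∈ supp α i, G ⟨i, t⟩ • U ⟨i, t⟩ := Finset.sum_congr rfl fun i _ => e1 i
          _ = ∑ p ∈ J, G p • U p := by rw [hJ, Finset.sum_sigma]
          _ = ∑ p : J, G p.1 • U p.1 := (Finset.sum_coe_sort J (fun p => G p • U p)).symm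
          _ = ∑ p : J, g p • U p.1 := by
              refine Finset.sum_congr rfl fun p _ => ?_
              congr 1
              simp only [hG, dif_pos p.2]
          _ = 0 := hg0
      refine ⟨d, ?_, ?_, ?_, ⟨p0.1.1, p0.1.2, ?_⟩⟩
      · intro i t h
        rw [← hmemJ]
        by_contra hc
        exact h (by simp [hd, hG, hc])
      · intro i
        have h := congrFun (congrArg Prod.fst hGsum) i
        simp only [Prod.fst_sum, Prod.smul_fst, Finset.sum_apply, Pi.smul_apply, smul_eq_mul,
          Pi.single_apply, Prod.fst_zero, Pi.zero_apply] at h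
        rw [Finset.sum_comm] at h
        simpa [mul_ite, hU, hd, Pi.single_apply] using h
      · intro s hs
        have h := congrFun (congrArg Prod.snd hGsum) ⟨s.1, hs⟩
        simp only [Prod.snd_sum, Prod.smul_snd, Finset.sum_apply, Pi.smul_apply, smul_eq_mul,
          Prod.snd_zero, Pi.zero_apply] at h
        convert h using 3
      · simpa [hd, hG, dif_pos p0.2] using hp0
    obtain ⟨d, hdsupp0, hdrow, hdcoord, hdne⟩ := hdir
    have hdsupp : ∀ i t, d i t ≠ 0 → α i t ≠ 0 := fun i t h => mem_supp.mp (hdsupp0 i t h)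
    have hasneg : ∀ e : Fin n → ι → ℝ, (∀ i, ∑ t, e i t = 0) →
        (∃ i t, e i t ≠ 0) → ∃ i t, e i t < 0 := by
      rintro e hrow ⟨i, t, hne⟩
      by_contra hc
      push_neg at hc
      exact hne ((Finset.sum_eq_zero_iff_of_nonneg (fun t _ => hc i t)).mp (hrow i) t
        (Finset.mem_univ t))
    rcases le_or_gt (∑ i, ∑ t, d i t * v i t last) 0 with hc | hc
    · exact step d hdsupp hdrow hdcoord hc (hasneg d hdrow hdne)
    · have hnegsum : ∀ f : Fin n → ι → ℝ,
          ∑ i, ∑ t, (-(d i t)) * f i t = -∑ i, ∑ t, d i t * f i t := by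
        intro f; simp [neg_mul]
      refine step (fun i t => -(d i t)) (fun i t h => hdsupp i t (by simpa using h))
        (fun i => by simp [hdrow i])
        (fun s hs => by rw [hnegsum (fun i t => v i t s), hdcoord s hs, neg_zero])
        (by rw [hnegsum (fun i t => v i t last)]; linarith) ?_
      apply hasneg _ (fun i => by simp [hdrow i])
      obtain ⟨i, t, h⟩ := hdne
      exact ⟨i, t, by simpa using h⟩



end RSFaux


/-- Corollary of the refined Shapley–Folkman lemma: equality in the first `m-1`
coordinates and inequality in the last coordinate. -/
theorem refined_shapley_folkman_half (m n : ℕ) (hm : 0 < m)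
    (S : Fin n → Set (Fin m → ℝ)) (z : Fin m → ℝ)
    (hz : z ∈ convexHull ℝ (minkSum S)) :
    ∃ (ks : Fin n → ℕ) (z' : Fin n → (Fin m → ℝ)),
      (∀ i, 1 ≤ ks i ∧ ks i ≤ m) ∧ (∑ i, ks i) ≤ m - 1 + n ∧
      (∀ i, z' i ∈ convHullK (ks i) (S i)) ∧
      (∀ s : Fin m, (s : ℕ) < m - 1 → z s = ∑ i, z' i s) ∧
      (∑ i, z' i ⟨m - 1, Nat.sub_lt hm Nat.one_pos⟩) ≤ z ⟨m - 1, Nat.sub_lt hm Nat.one_pos⟩ := by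
  classical
  rw [_root_.convexHull_eq] at hz
  obtain ⟨κ, T, lam, x, hlam0, hlam1, hxmem, hx⟩ := hz
  have hex : ∀ t : ↥T, ∃ w : Fin n → (Fin m → ℝ), (∀ i, w i ∈ S i) ∧ x ↑t = ∑ i, w i :=
    fun t => hxmem ↑t t.2
  choose w hw1 hw2 using hex
  set v : Fin n → ↥T → (Fin m → ℝ) := fun i t => w t i with hv
  set α0 : Fin n → ↥T → ℝ := fun _ t => lam ↑t with hα0
  set last : Fin m := ⟨m - 1, Nat.sub_lt hm Nat.one_pos⟩ with hlast
  have hrep : ∀ s : Fin m, z s = ∑ i, ∑ t, α0 i t * v i t s := by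
    intro s
    have hz' : z = ∑ t ∈ T, lam t • x t := by
      rw [← hx, Finset.centerMass_eq_of_sum_1 _ _ hlam1]
    have : z s = ∑ t : ↥T, lam ↑t * x ↑t s := by
      rw [hz', ← Finset.sum_coe_sort T (fun t => lam t • x t)]
      simp [Finset.sum_apply]
    rw [this, Finset.sum_comm]
    refine Finset.sum_congr rfl fun t _ => ?_
    rw [hw2 t, Finset.sum_apply, Finset.mul_sum]
  have hrow : ∀ i, ∑ t, α0 i t = 1 := by
    intro i
    rw [hα0, ← hlam1]
    exact Finset.sum_coe_sort T lam
  obtain ⟨α', h0', h1', h2', h3', hsub', hbound'⟩ :=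
    RSFaux.descend hm v z last (∑ i, (RSFaux.supp α0 i).card) α0 le_rfl
      (fun i t => hlam0 ↑t t.2) hrow (fun s hs => hrep s) (le_of_eq (hrep last).symm)
  set ks : Fin n → ℕ := fun i => (RSFaux.supp α' i).card with hks
  set z' : Fin n → (Fin m → ℝ) := fun i => ∑ t ∈ RSFaux.supp α' i, α' i t • v i t with hz'
  have hksge : ∀ i, 1 ≤ ks i := by
    intro i
    rw [hks, Nat.one_le_iff_ne_zero, Ne, Finset.card_eq_zero]
    intro h
    have : ∑ t, α' i t = 0 := by
      apply Finset.sum_eq_zero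
      intro t _
      by_contra hne
      have : t ∈ RSFaux.supp α' i := RSFaux.mem_supp.mpr hne
      simp [h] at this
    rw [h1' i] at this
    exact one_ne_zero this
  have hsum_full : ∀ (i : Fin n) (f : ↥T → ℝ),
      ∑ t ∈ RSFaux.supp α' i, α' i t * f t = ∑ t, α' i t * f t := by
    intro i f
    apply Finset.sum_subset (Finset.subset_univ _)
    intro t _ ht
    rw [RSFaux.mem_supp, not_not] at ht
    simp [ht]
  have hz's : ∀ (i : Fin n) (s : Fin m), z' i s = ∑ t, α' i t * v i t s := by
    intro i s
    show (∑ t ∈ RSFaux.supp α' i, α' i t • v i t) s = _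
    rw [Finset.sum_apply]
    simp only [Pi.smul_apply, smul_eq_mul]
    exact hsum_full i (fun t => v i t s)
  have hbound : ∑ j, ks j ≤ n + m - 1 := hbound'
  refine ⟨ks, z', fun i => ⟨hksge i, ?_⟩, by omega, ?_, ?_, ?_⟩
  · -- ks i ≤ m
    have hn : 0 < n := i.pos
    have h1 : ks i + ∑ j ∈ Finset.univ.erase i, ks j = ∑ j, ks j :=
      Finset.add_sum_erase _ _ (Finset.mem_univ i)
    have h2 : (Finset.univ.erase i).card ≤ ∑ j ∈ Finset.univ.erase i, ks j := by
      refine le_trans (le_of_eq ?_) (Finset.sum_le_sum (fun j _ => hksge j))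
      simp
    have h3 : (Finset.univ.erase i).card = n - 1 := by
      rw [Finset.card_erase_of_mem (Finset.mem_univ i)]
      simp
    omega
  · -- membership in convHullK
    intro i
    have e : ↥(RSFaux.supp α' i) ≃ Fin (ks i) :=
      Fintype.equivFinOfCardEq (Fintype.card_coe _)
    refine ⟨fun j => v i ↑(e.symm j), fun j => α' i ↑(e.symm j), fun j => hw1 _ i,
      fun j => h0' i _, ?_, ?_⟩
    · rw [Equiv.sum_comp e.symm (fun t : ↥(RSFaux.supp α' i) => α' i ↑t)]
      rw [Finset.sum_coe_sort (RSFaux.supp α' i) (fun t => α' i t)]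
      have := hsum_full i (fun _ => 1)
      simpa using (this.trans (by simpa using h1' i))
    · rw [Equiv.sum_comp e.symm (fun t : ↥(RSFaux.supp α' i) => α' i ↑t • v i ↑t)]
      rw [Finset.sum_coe_sort (RSFaux.supp α' i) (fun t => α' i t • v i t)]
  · intro s hs
    rw [h2' s hs]
    exact Finset.sum_congr rfl fun i _ => (hz's i s).symm
  · calc ∑ i, z' i last = ∑ i, ∑ t, α' i t * v i t last :=
          Finset.sum_congr rfl fun i _ => hz's i last
      _ ≤ z last := h3'
end

section
/- For any proper function f : ℝ^n → ℝ ∪ {+∞}, the (n+1)-th nonconvexity of f equals its nonconvexity: ρ^{n+1}(f) = ρ(f). -/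
open Finset

private lemma ereal_coe_sum {ι : Type*} (s : Finset ι) (h : ι → ℝ) :
    ((∑ j ∈ s, h j : ℝ) : EReal) = ∑ j ∈ s, ((h j : ℝ) : EReal) :=
  map_sum (⟨⟨((↑) : ℝ → EReal), EReal.coe_zero⟩, fun a b => EReal.coe_add a b⟩ : ℝ →+ EReal) h s

/-- Carathéodory-type reduction: any nonnegative combination can be replaced by one
supported on at most `n+1` points, with the same barycenter and total mass, and with
a not-larger value of `∑ β j * g j`. -/
private lemma reduce_support (n : ℕ) : ∀ (m k : ℕ) (x : Fin k → (Fin n → ℝ)) (g α : Fin k → ℝ),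
    (∀ j, 0 ≤ α j) → (univ.filter fun j => α j ≠ 0).card ≤ m →
    ∃ β : Fin k → ℝ, (∀ j, 0 ≤ β j) ∧ ∑ j, β j = ∑ j, α j ∧
      ∑ j, β j • x j = ∑ j, α j • x j ∧ ∑ j, β j * g j ≤ ∑ j, α j * g j ∧
      (univ.filter fun j => β j ≠ 0).card ≤ n + 1 := by
  intro m
  induction m with
  | zero =>
    intro k x g α hα hcard
    exact ⟨α, hα, rfl, rfl, le_refl _, le_trans hcard (by omega)⟩
  | succ m ih =>
    intro k x g α hα hcard
    by_cases hc2 : (univ.filter fun j => α j ≠ 0).card ≤ m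
    · exact ih k x g α hα hc2
    by_cases hc3 : (univ.filter fun j => α j ≠ 0).card ≤ n + 1
    · exact ⟨α, hα, rfl, rfl, le_refl _, hc3⟩
    push_neg at hc2 hc3
    set s : Finset (Fin k) := univ.filter fun j => α j ≠ 0 with hs
    -- the points indexed by `s` are affinely dependent
    have hnotind : ¬ AffineIndependent ℝ (fun e : ↥s => x ↑e) := by
      intro hind
      have h1 := hind.card_le_finrank_succ
      rw [Fintype.card_coe] at h1
      have h2 : Module.finrank ℝ (vectorSpan ℝ (Set.range fun e : ↥s => x ↑e))
          ≤ Module.finrank ℝ (Fin n → ℝ) := Submodule.finrank_le _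
      rw [Module.finrank_fin_fun] at h2
      omega
    rw [affineIndependent_iff] at hnotind
    push_neg at hnotind
    obtain ⟨s', w, hw0, hwx, e0, he0, hwne⟩ := hnotind
    -- transport the affine dependence to a function `γ` on `Fin k` supported in `s`
    set γ : Fin k → ℝ := fun j => if h : j ∈ s then (if ⟨j, h⟩ ∈ s' then w ⟨j, h⟩ else 0) else 0
      with hγ
    have key : ∀ {M : Type} [AddCommMonoid M] (F : Fin k → M),
        (∀ j, γ j = 0 → F j = 0) → ∑ j, F j = ∑ e ∈ s', F ↑e := by
      intro M _ F hF
      rw [← Finset.sum_image (f := F) (g := fun e : ↥s => (↑e : Fin k))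
        (fun a _ b _ h => Subtype.coe_injective h)]
      apply (Finset.sum_subset (Finset.subset_univ _) _).symm
      intro j _ hj
      apply hF
      simp only [hγ]
      split_ifs with h1 h2
      · exact (hj (Finset.mem_image.2 ⟨⟨j, h1⟩, h2, rfl⟩)).elim
      · rfl
      · rfl
    have hγe : ∀ e : ↥s, e ∈ s' → γ ↑e = w e := by
      intro e he
      simp only [hγ, dif_pos e.2, Subtype.coe_eta, if_pos he]
    have hγsum : ∑ j, γ j = 0 := by
      rw [key γ (fun j h => h)]
      rw [Finset.sum_congr rfl (fun e he => hγe e he)]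
      exact hw0
    have hγx : ∑ j, γ j • x j = 0 := by
      rw [key (fun j => γ j • x j) (fun j h => by simp [h])]
      rw [Finset.sum_congr rfl (fun e he => by rw [hγe e he])]
      exact hwx
    have hγsupp : ∀ j, α j = 0 → γ j = 0 := by
      intro j hj
      have : j ∉ s := by simp [hs, hj]
      simp [hγ, this]
    have hγne : ∃ j, γ j ≠ 0 := ⟨↑e0, by rw [hγe e0 he0]; exact hwne⟩
    -- flip the sign of `γ` if needed so that `∑ γ j * g j ≥ 0`
    obtain ⟨δ, hδsum, hδx, hδsupp, hδne, hδg⟩ :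
        ∃ δ : Fin k → ℝ, (∑ j, δ j = 0) ∧ (∑ j, δ j • x j = 0) ∧ (∀ j, α j = 0 → δ j = 0)
          ∧ (∃ j, δ j ≠ 0) ∧ 0 ≤ ∑ j, δ j * g j := by
      rcases le_or_gt 0 (∑ j, γ j * g j) with h | h
      · exact ⟨γ, hγsum, hγx, hγsupp, hγne, h⟩
      · obtain ⟨j1, hj1⟩ := hγne
        refine ⟨-γ, by simp [hγsum], ?_, fun j hj => by simp [hγsupp j hj], ⟨j1, by simpa using hj1⟩, ?_⟩
        · simp only [Pi.neg_apply, neg_smul, Finset.sum_neg_distrib, hγx, neg_zero]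
        · simp only [Pi.neg_apply, neg_mul, Finset.sum_neg_distrib]
          linarith
    -- `δ` has a positive entry
    have hpos : ∃ j, 0 < δ j := by
      by_contra hnp
      push_neg at hnp
      obtain ⟨j1, hj1⟩ := hδne
      have hlt : δ j1 < 0 := lt_of_le_of_ne (hnp j1) hj1
      have : ∑ j, δ j < ∑ j : Fin k, (0 : ℝ) :=
        Finset.sum_lt_sum (fun j _ => hnp j) ⟨j1, Finset.mem_univ _, hlt⟩
      simp [hδsum] at this
    obtain ⟨jp, hjp⟩ := hpos
    have hTne : (univ.filter fun j => 0 < δ j).Nonempty := ⟨jp, by simp [hjp]⟩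
    obtain ⟨j0, hj0T, hmin⟩ := Finset.exists_min_image _ (fun j => α j / δ j) hTne
    have hδj0 : 0 < δ j0 := (Finset.mem_filter.1 hj0T).2
    have hαδ : ∀ j, δ j ≠ 0 → α j ≠ 0 := fun j => mt (hδsupp j)
    have hαj0 : 0 < α j0 := lt_of_le_of_ne (hα j0) (Ne.symm (hαδ j0 (ne_of_gt hδj0)))
    set t : ℝ := α j0 / δ j0 with ht
    have ht0 : 0 ≤ t := div_nonneg (le_of_lt hαj0) (le_of_lt hδj0)
    set β : Fin k → ℝ := fun j => α j - t * δ j with hβ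
    have hβ0 : ∀ j, 0 ≤ β j := by
      intro j
      rcases le_or_gt (δ j) 0 with h | h
      · have : t * δ j ≤ 0 := mul_nonpos_of_nonneg_of_nonpos ht0 h
        have := hα j
        simp only [hβ]; linarith
      · have hjT : j ∈ univ.filter fun j => 0 < δ j := by simp [h]
        have h2 := hmin j hjT
        rw [ht, div_le_div_iff₀ hδj0 h] at h2
        have htj : t * δ j ≤ α j := by
          rw [ht, div_mul_eq_mul_div, div_le_iff₀ hδj0]
          exact h2
        simp only [hβ]
        linarith
    have hβj0 : β j0 = 0 := by
      simp only [hβ, ht]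
      field_simp
      ring
    have hβsum : ∑ j, β j = ∑ j, α j := by
      simp only [hβ, Finset.sum_sub_distrib, ← Finset.mul_sum, hδsum, mul_zero, sub_zero]
    have hβx : ∑ j, β j • x j = ∑ j, α j • x j := by
      have hstep : ∀ j : Fin k, β j • x j = α j • x j - t • (δ j • x j) := by
        intro j
        simp only [hβ, sub_smul, mul_smul]
      simp only [hstep, Finset.sum_sub_distrib, ← Finset.smul_sum, hδx, smul_zero, sub_zero]
    have hβg : ∑ j, β j * g j ≤ ∑ j, α j * g j := by
      have hstep : ∑ j, β j * g j = ∑ j, α j * g j - t * ∑ j, δ j * g j := by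
        rw [Finset.mul_sum, ← Finset.sum_sub_distrib]
        exact Finset.sum_congr rfl fun j _ => by simp only [hβ]; ring
      rw [hstep]
      nlinarith [mul_nonneg ht0 hδg]
    have hss : (univ.filter fun j => β j ≠ 0) ⊂ s := by
      rw [Finset.ssubset_iff_of_subset]
      · refine ⟨j0, ?_, by simp [hβj0]⟩
        simp [hs, ne_of_gt hαj0]
      · intro j hj
        rw [Finset.mem_filter] at hj
        rw [hs, Finset.mem_filter]
        refine ⟨Finset.mem_univ _, fun h0 => hj.2 ?_⟩
        simp [hβ, h0, hδsupp j h0]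
    have hcard' : (univ.filter fun j => β j ≠ 0).card ≤ m := by
      have := Finset.card_lt_card hss
      omega
    obtain ⟨β', h1, h2, h3, h4, h5⟩ := ih k x g β hβ0 hcard'
    exact ⟨β', h1, h2.trans hβsum, h3.trans hβx, h4.trans hβg, h5⟩

/-- Repackage a combination supported on at most `n+1` points as a combination
indexed by `Fin (n+1)`. -/
private lemma to_fin_succ (n k : ℕ) (x : Fin k → (Fin n → ℝ)) (β : Fin k → ℝ)
    (hβ : ∀ j, 0 ≤ β j) (hsum : ∑ j, β j = 1)
    (hcard : (univ.filter fun j => β j ≠ 0).card ≤ n + 1) :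
    ∃ (e : Fin (n + 1) → Fin k) (w : Fin (n + 1) → ℝ),
      (∀ i, 0 ≤ w i) ∧ ∑ i, w i = 1 ∧
      ∑ i, w i • x (e i) = ∑ j, β j • x j ∧
      ∀ (F : Fin k → ℝ), ∑ i, w i * F (e i) = ∑ j, β j * F j := by
  set s : Finset (Fin k) := univ.filter fun j => β j ≠ 0 with hsdef
  have hβs : ∀ j, j ∉ s → β j = 0 := by
    intro j hj
    by_contra h
    exact hj (by simp [hsdef, h])
  have hsumβ : ∀ {M : Type} [AddCommMonoid M] (G : Fin k → M),
      (∀ j, β j = 0 → G j = 0) → ∑ j ∈ s, G j = ∑ j, G j := by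
    intro M _ G hG
    exact Finset.sum_subset (Finset.subset_univ _) (fun j _ hj => hG j (hβs j hj))
  have hsne : s.Nonempty := by
    rcases Finset.eq_empty_or_nonempty s with h | h
    · exfalso
      have h0 : ∑ j, β j = 0 := by
        rw [← hsumβ (fun j => β j) (fun j hj => hj), h, Finset.sum_empty]
      rw [hsum] at h0
      norm_num at h0
    · exact h
  set m : ℕ := s.card with hm
  have hm0 : 0 < m := Finset.card_pos.2 hsne
  have hmle : m ≤ n + 1 := hcard
  set r : ℕ := n + 1 - m with hr
  have hmr : m + r = n + 1 := by omega
  set E : Fin m ≃o ↥s := s.orderIsoOfFin rfl with hE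
  set e : Fin (n + 1) → Fin k :=
    fun i => if h : (i : ℕ) < m then ↑(E ⟨i, h⟩) else ↑(E ⟨0, hm0⟩) with he
  set w : Fin (n + 1) → ℝ :=
    fun i => if h : (i : ℕ) < m then β ↑(E ⟨i, h⟩) else 0 with hw
  have key : ∀ {M : Type} [AddCommMonoid M] (G : Fin k → ℝ → M),
      (∀ j, G j 0 = 0) → ∑ i, G (e i) (w i) = ∑ j, G j (β j) := by
    intro M _ G hG
    have step1 : ∑ i, G (e i) (w i)
        = ∑ i : Fin (m + r), G (e (finCongr hmr i)) (w (finCongr hmr i)) :=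
      (Equiv.sum_comp (finCongr hmr) fun i => G (e i) (w i)).symm
    rw [step1]
    rw [Fin.sum_trunc (f := fun i : Fin (m + r) => G (e (finCongr hmr i)) (w (finCongr hmr i)))
      (fun j => by
        have hnl : ¬ ((finCongr hmr (Fin.natAdd m j) : Fin (n+1)) : ℕ) < m := by
          simp [Fin.natAdd]
        simp only [hw, dif_neg hnl]
        exact hG _)]
    have step2 : ∀ i : Fin m,
        G (e (finCongr hmr (Fin.castLE (Nat.le.intro rfl) i)))
          (w (finCongr hmr (Fin.castLE (Nat.le.intro rfl) i))) = G ↑(E i) (β ↑(E i)) := by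
      intro i
      have hilt : ((finCongr hmr (Fin.castLE (Nat.le.intro rfl) i) : Fin (n+1)) : ℕ) < m := by
        simpa using i.2
      simp only [he, hw, dif_pos hilt]
      congr 1 <;> · congr 1; apply Fin.ext; simp
    rw [(Finset.sum_congr rfl (fun i _ => step2 i) : ∑ i : Fin m, G (e (finCongr hmr (Fin.castAdd r i))) (w (finCongr hmr (Fin.castAdd r i))) = ∑ i : Fin m, G ↑(E i) (β ↑(E i)))]
    have step3 : ∑ i : Fin m, G ↑(E i) (β ↑(E i)) = ∑ p : ↥s, G ↑p (β ↑p) :=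
      Equiv.sum_comp E.toEquiv (fun p : ↥s => G ↑p (β ↑p))
    rw [step3, Finset.sum_coe_sort s (fun j => G j (β j))]
    exact hsumβ (fun j => G j (β j)) (fun j hj => by show G j (β j) = 0; rw [hj]; exact hG j)
  refine ⟨e, w, ?_, ?_, ?_, ?_⟩
  · intro i
    simp only [hw]
    split_ifs with h
    · exact hβ _
    · exact le_refl _
  · rw [key (fun _ c => c) (fun _ => rfl)]; exact hsum
  · exact key (fun j c => c • x j) (fun j => zero_smul _ _)
  · intro F
    exact key (fun j c => c * F j) (fun j => zero_mul _)




/-- The `k`-th nonconvexity `ρᵏ(f)` of a function `f : E → ℝ ∪ {+∞}` (encoded with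
values in `EReal`): the supremum of `f(Σ αⱼ xʲ) − Σ αⱼ f(xʲ)` over all convex
combinations of `k` points of the domain of `f`. -/
noncomputable def rhoK {E : Type*} [AddCommMonoid E] [Module ℝ E] (k : ℕ)
    (f : E → EReal) : EReal :=
  sSup {d : EReal | ∃ (x : Fin k → E) (α : Fin k → ℝ),
    (∀ j, f (x j) ≠ ⊤) ∧ (∀ j, 0 ≤ α j) ∧ (∑ j, α j) = 1 ∧
    d = f (∑ j, α j • x j) - ∑ j, (α j : EReal) * f (x j)}

/-- The nonconvexity `ρ(f)` of `f`: the same supremum over all finite convex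
combinations of points of the domain of `f`. -/
noncomputable def rho {E : Type*} [AddCommMonoid E] [Module ℝ E] (f : E → EReal) : EReal :=
  ⨆ k : ℕ, rhoK k f

/-- For a proper function `f : ℝⁿ → ℝ ∪ {+∞}`, the `(n+1)`-th nonconvexity equals
the nonconvexity: `ρ^{n+1}(f) = ρ(f)`. -/
theorem rhoK_succ_eq_rho (n : ℕ) (f : (Fin n → ℝ) → EReal)
    (hbot : ∀ x, f x ≠ ⊥) (hproper : ∃ x, f x ≠ ⊤) :
    rhoK (n + 1) f = rho f := by
  apply le_antisymm
  · exact le_iSup (fun k => rhoK k f) (n + 1)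
  · apply iSup_le
    intro k
    apply sSup_le
    rintro d ⟨x, α, hxtop, hα0, hα1, rfl⟩
    set g : Fin k → ℝ := fun j => (f (x j)).toReal with hg
    have hfx : ∀ j, f (x j) = ((g j : ℝ) : EReal) :=
      fun j => (EReal.coe_toReal (hxtop j) (hbot _)).symm
    obtain ⟨β, hβ0, hβsum, hβx, hβg, hβcard⟩ :=
      reduce_support n (univ.filter fun j => α j ≠ 0).card k x g α hα0 le_rfl
    rw [hα1] at hβsum
    obtain ⟨e, w, hw0, hwsum, hwx, hwF⟩ := to_fin_succ n k x β hβ0 hβsum hβcard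
    have hmem : (f (∑ i, w i • x (e i)) - ∑ i, (w i : EReal) * f (x (e i)))
        ∈ {d : EReal | ∃ (y : Fin (n+1) → (Fin n → ℝ)) (α : Fin (n+1) → ℝ),
          (∀ j, f (y j) ≠ ⊤) ∧ (∀ j, 0 ≤ α j) ∧ (∑ j, α j) = 1 ∧
          d = f (∑ j, α j • y j) - ∑ j, (α j : EReal) * f (y j)} :=
      ⟨fun i => x (e i), w, fun i => hxtop (e i), hw0, hwsum, rfl⟩
    refine le_trans ?_ (le_sSup hmem)
    have h1 : ∑ j, ((α j : EReal) * f (x j)) = ((∑ j, α j * g j : ℝ) : EReal) := by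
      rw [ereal_coe_sum]
      exact Finset.sum_congr rfl fun j _ => by rw [hfx j, ← EReal.coe_mul]
    have h2 : ∑ i, ((w i : EReal) * f (x (e i))) = ((∑ j, β j * g j : ℝ) : EReal) := by
      rw [← hwF g, ereal_coe_sum]
      exact Finset.sum_congr rfl fun i _ => by rw [hfx (e i), ← EReal.coe_mul]
    rw [h1, h2, hwx, hβx]
    exact EReal.sub_le_sub (le_refl _) (EReal.coe_le_coe_iff.2 hβg)
end

section
/- Let f(x) = min_{s=1,...,n} x_s be defined on the box {x ∈ ℝ^n : 0 ≤ x ≤ 1} (and +∞ outside). Then for every integer k with 1 ≤ k ≤ n, the k-th nonconvexity satisfies ρ^k(f) = (k−1)/k, and for every k ≥ n+1, ρ^k(f) = (n−1)/n. -/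
private lemma coe_sum_aux (k : ℕ) (a : Fin k → ℝ) :
    ∑ j, ((a j : ℝ) : EReal) = ((∑ j, a j : ℝ) : EReal) :=
  (map_sum (⟨⟨Real.toEReal, EReal.coe_zero⟩, EReal.coe_add⟩ : ℝ →+ EReal) a Finset.univ).symm

private lemma iInf_fin_eq {n : ℕ} (x : Fin n → ℝ) (s0 : Fin n) (h : ∀ s, x s0 ≤ x s) :
    (⨅ s, x s) = x s0 :=
  haveI : Nonempty (Fin n) := ⟨s0⟩
  le_antisymm (ciInf_le (Set.finite_range x).bddBelow s0) (le_ciInf h)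

private lemma rhoK_key (n : ℕ) (hn : 0 < n) (f : (Fin n → ℝ) → EReal)
    (hf_in : ∀ x : Fin n → ℝ, (∀ s, 0 ≤ x s ∧ x s ≤ 1) → f x = ((⨅ s, x s : ℝ) : EReal))
    (hf_out : ∀ x : Fin n → ℝ, ¬ (∀ s, 0 ≤ x s ∧ x s ≤ 1) → f x = ⊤)
    (k : ℕ) (hk : 1 ≤ k) :
    rhoK k f = ((1 - ((min k n : ℕ) : ℝ)⁻¹ : ℝ) : EReal) := by
  haveI : Nonempty (Fin n) := ⟨⟨0, hn⟩⟩
  set m : ℕ := min k n with hmdef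
  have hm1 : 1 ≤ m := le_min hk hn
  have hmR : (1 : ℝ) ≤ (m : ℝ) := by exact_mod_cast hm1
  have hmR0 : (0 : ℝ) < (m : ℝ) := by linarith
  have hinvle : ((m : ℝ))⁻¹ ≤ 1 := by
    rw [inv_le_one_iff₀]; right; exact hmR
  have hinv0 : (0 : ℝ) ≤ ((m : ℝ))⁻¹ := by positivity
  apply le_antisymm
  · -- upper bound
    apply sSup_le
    rintro d ⟨x, α, hfin, hα0, hα1, rfl⟩
    have hbox : ∀ j, ∀ s, 0 ≤ x j s ∧ x j s ≤ 1 := by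
      intro j
      by_contra h
      exact hfin j (hf_out _ h)
    set mv : Fin k → ℝ := fun j => ⨅ s, x j s with hmv
    have hfx : ∀ j, f (x j) = ((mv j : ℝ) : EReal) := fun j => hf_in _ (hbox j)
    have hmv0 : ∀ j, 0 ≤ mv j := fun j => le_ciInf fun s => (hbox j s).1
    have hmv1 : ∀ j, mv j ≤ 1 := fun j =>
      le_trans (ciInf_le (Set.finite_range _).bddBelow ⟨0, hn⟩) (hbox j ⟨0, hn⟩).2
    choose σ hσ using fun j => Finite.exists_min (x j)
    have hxσ : ∀ j, x j (σ j) = mv j := fun j => (iInf_fin_eq (x j) (σ j) (hσ j)).symm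
    set y : Fin n → ℝ := ∑ j, α j • x j with hy
    have hys : ∀ s, y s = ∑ j, α j * x j s := by
      intro s; simp [hy, Finset.sum_apply]
    have hybox : ∀ s, 0 ≤ y s ∧ y s ≤ 1 := by
      intro s
      rw [hys]
      constructor
      · exact Finset.sum_nonneg fun j _ => mul_nonneg (hα0 j) (hbox j s).1
      · calc ∑ j, α j * x j s ≤ ∑ j, α j :=
              Finset.sum_le_sum fun j _ => mul_le_of_le_one_right (hα0 j) (hbox j s).2
          _ = 1 := hα1
    have hfy : f y = ((⨅ s, y s : ℝ) : EReal) := hf_in _ hybox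
    set M : ℝ := ⨅ s, y s with hM
    have hcast : (∑ j, (α j : EReal) * f (x j)) = ((∑ j, α j * mv j : ℝ) : EReal) := by
      simp only [hfx, ← EReal.coe_mul]
      exact coe_sum_aux k _
    rw [hfy, hcast, ← EReal.coe_sub, EReal.coe_le_coe_iff]
    -- real inequality
    set β : Fin k → ℝ := fun j => α j * (1 - mv j) with hβ
    have hβ0 : ∀ j, 0 ≤ β j := fun j => mul_nonneg (hα0 j) (by linarith [hmv1 j])
    set T : ℝ := ∑ j, β j with hT
    have hT0 : 0 ≤ T := Finset.sum_nonneg fun j _ => hβ0 j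
    have hT1 : T ≤ 1 := by
      rw [hT, ← hα1]
      exact Finset.sum_le_sum fun j _ => mul_le_of_le_one_right (hα0 j) (by linarith [hmv0 j])
    set S : Finset (Fin n) := Finset.image σ Finset.univ with hS
    have hSne : S.Nonempty := ⟨σ ⟨0, hk⟩, Finset.mem_image_of_mem _ (Finset.mem_univ _)⟩
    have hcard : S.card ≤ m := by
      apply le_min
      · exact le_trans Finset.card_image_le (by simp)
      · exact le_trans (Finset.card_le_univ S) (by simp)
    have hcard0 : 0 < S.card := hSne.card_pos
    have hfib : ∑ s ∈ S, ∑ j ∈ Finset.univ.filter (fun j => σ j = s), β j = T :=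
      Finset.sum_fiberwise_of_maps_to (fun j _ => Finset.mem_image_of_mem _ (Finset.mem_univ j)) β
    obtain ⟨st, hstS, hst⟩ := Finset.exists_le_of_sum_le hSne
      (show ∑ _s ∈ S, T / S.card ≤ ∑ s ∈ S, ∑ j ∈ Finset.univ.filter (fun j => σ j = s), β j by
        rw [hfib, Finset.sum_const, nsmul_eq_mul]
        rw [mul_div_cancel₀]
        exact_mod_cast hcard0.ne')
    set G : ℝ := ∑ j ∈ Finset.univ.filter (fun j => σ j = st), β j with hG
    have hGm : T / (m : ℝ) ≤ G := by
      refine le_trans ?_ hst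
      apply div_le_div_of_nonneg_left hT0
      · exact_mod_cast hcard0
      · exact_mod_cast hcard
    have hMle : M ≤ 1 - G := by
      have h1 : M ≤ y st := ciInf_le (Set.finite_range y).bddBelow st
      have h2 : y st ≤ ∑ j, (α j - if σ j = st then β j else 0) := by
        rw [hys]
        apply Finset.sum_le_sum
        intro j _
        by_cases h : σ j = st
        · rw [if_pos h, ← h, hxσ j]
          simp only [hβ]
          nlinarith [hα0 j, hmv0 j, hmv1 j]
        · rw [if_neg h, sub_zero]
          exact mul_le_of_le_one_right (hα0 j) (hbox j st).2
      have h3 : ∑ j, (α j - if σ j = st then β j else 0) = 1 - G := by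
        rw [Finset.sum_sub_distrib, hα1, hG, Finset.sum_filter]
      linarith
    have hsum : ∑ j, α j * mv j = 1 - T := by
      rw [hT, ← hα1, ← Finset.sum_sub_distrib]
      apply Finset.sum_congr rfl
      intro j _
      simp only [hβ]; ring
    rw [hsum]
    have key : T - T * ((m : ℝ))⁻¹ ≤ 1 - ((m : ℝ))⁻¹ := by
      nlinarith [mul_nonneg (sub_nonneg.2 hT1) (sub_nonneg.2 hinvle)]
    have hTdiv : T / (m : ℝ) = T * ((m : ℝ))⁻¹ := div_eq_mul_inv T _
    linarith [hGm, hMle]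
  · -- lower bound: exhibit the witness
    apply le_sSup
    refine ⟨fun j s => if (s : ℕ) = (j : ℕ) then 0 else 1,
      fun j => if (j : ℕ) < m then ((m : ℝ))⁻¹ else 0, ?_, ?_, ?_, ?_⟩
    · intro j
      rw [hf_in _ (by intro s; dsimp only; split <;> norm_num)]
      exact EReal.coe_ne_top _
    · intro j; dsimp only; split
      · positivity
      · exact le_refl 0
    · show (∑ j : Fin k, if (j : ℕ) < m then ((m : ℝ))⁻¹ else 0) = 1
      rw [Fin.sum_univ_eq_sum_range (fun i => if i < m then ((m : ℝ))⁻¹ else 0) k]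
      rw [← Finset.sum_subset (Finset.range_subset_range.mpr (min_le_left k n))
        (fun i _ hi => if_neg (fun hlt => hi (Finset.mem_range.mpr hlt)))]
      rw [Finset.sum_congr rfl (fun i hi => if_pos (Finset.mem_range.mp hi))]
      rw [Finset.sum_const, Finset.card_range, nsmul_eq_mul]
      exact mul_inv_cancel₀ hmR0.ne'
    · -- value computation
      set X : Fin k → Fin n → ℝ := fun j s => if (s : ℕ) = (j : ℕ) then 0 else 1 with hX
      set A : Fin k → ℝ := fun j => if (j : ℕ) < m then ((m : ℝ))⁻¹ else 0 with hA
      show ((1 - ((m : ℕ) : ℝ)⁻¹ : ℝ) : EReal) = f (∑ j, A j • X j) - ∑ j, ((A j : ℝ) : EReal) * f (X j)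
      have hterm : ∀ j : Fin k, ((A j : ℝ) : EReal) * f (X j) = 0 := by
        intro j
        by_cases hj : (j : ℕ) < m
        · have hjn : (j : ℕ) < n := lt_of_lt_of_le hj (min_le_right k n)
          have hX0 : X j ⟨(j : ℕ), hjn⟩ = 0 := by simp [hX]
          have hfXj : f (X j) = ((0 : ℝ) : EReal) := by
            rw [hf_in _ (by intro s; simp only [hX]; split <;> norm_num)]
            rw [iInf_fin_eq (X j) ⟨(j : ℕ), hjn⟩ (by
              intro s; rw [hX0]; simp only [hX]; split <;> norm_num), hX0]
          rw [hfXj, EReal.coe_zero, mul_zero]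
        · have : A j = 0 := if_neg hj
          rw [this, EReal.coe_zero, zero_mul]
      rw [Finset.sum_eq_zero fun j _ => hterm j, sub_zero]
      -- compute the convex combination
      set y : Fin n → ℝ := ∑ j, A j • X j with hy
      have hys : ∀ s : Fin n, y s = 1 - (if (s : ℕ) < m then ((m : ℝ))⁻¹ else 0) := by
        intro s
        have h1 : y s = ∑ j : Fin k, A j * X j s := by simp [hy, Finset.sum_apply]
        rw [h1]
        have h2 : (∑ j : Fin k, A j * X j s)
            = ∑ i ∈ Finset.range k, ((if i < m then ((m : ℝ))⁻¹ else 0)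
              * (if (s : ℕ) = i then 0 else 1)) :=
          Fin.sum_univ_eq_sum_range
            (fun i => (if i < m then ((m : ℝ))⁻¹ else 0) * (if (s : ℕ) = i then 0 else 1)) k
        rw [h2, ← Finset.sum_subset (Finset.range_subset_range.mpr (min_le_left k n))
          (fun i _ hi => by
            rw [if_neg (fun hlt => hi (Finset.mem_range.mpr hlt)), zero_mul])]
        have h3 : ∀ i ∈ Finset.range m, (if i < m then ((m : ℝ))⁻¹ else 0)
            * (if (s : ℕ) = i then 0 else 1)
            = ((m : ℝ))⁻¹ - (if (s : ℕ) = i then ((m : ℝ))⁻¹ else 0) := by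
          intro i hi
          rw [if_pos (Finset.mem_range.mp hi)]
          split <;> ring
        rw [Finset.sum_congr rfl h3, Finset.sum_sub_distrib, Finset.sum_const,
          Finset.card_range, nsmul_eq_mul, mul_inv_cancel₀ hmR0.ne',
          Finset.sum_ite_eq (Finset.range m) (s : ℕ) (fun _ => ((m : ℝ))⁻¹)]
        simp only [Finset.mem_range]
      have hybox : ∀ s, 0 ≤ y s ∧ y s ≤ 1 := by
        intro s
        rw [hys s]
        split <;> constructor <;> linarith
      rw [hf_in _ hybox]
      have h0m : (0 : ℕ) < m := hm1
      have hinf : (⨅ s, y s) = y ⟨0, hn⟩ := by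
        apply iInf_fin_eq
        intro s
        rw [hys, hys]
        simp only [Fin.val_zero, if_pos h0m]
        split <;> linarith
      rw [hinf, hys ⟨0, hn⟩]
      simp [h0m]

/-- The `k`-th nonconvexity of `f(x) = min_s x_s` on the box `0 ≤ x ≤ 1` equals
`(k−1)/k` for `1 ≤ k ≤ n` and `(n−1)/n` for `k ≥ n+1`. -/
theorem rhoK_min_on_box (n : ℕ) (hn : 0 < n) (f : (Fin n → ℝ) → EReal)
    (hf_in : ∀ x : Fin n → ℝ, (∀ s, 0 ≤ x s ∧ x s ≤ 1) → f x = ((⨅ s, x s : ℝ) : EReal))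
    (hf_out : ∀ x : Fin n → ℝ, ¬ (∀ s, 0 ≤ x s ∧ x s ≤ 1) → f x = ⊤) :
    (∀ k : ℕ, 1 ≤ k → k ≤ n → rhoK k f = (((k : ℝ) - 1) / (k : ℝ) : EReal)) ∧
    (∀ k : ℕ, n + 1 ≤ k → rhoK k f = (((n : ℝ) - 1) / (n : ℝ) : EReal)) := by
  constructor
  · intro k hk1 hkn
    rw [rhoK_key n hn f hf_in hf_out k hk1, min_eq_left hkn]
    have hkR : (0 : ℝ) < (k : ℝ) := by exact_mod_cast hk1
    congr 1
    field_simp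
    ring
  · intro k hk
    have hk1 : 1 ≤ k := le_trans (Nat.le_add_left 1 n) hk
    rw [rhoK_key n hn f hf_in hf_out k hk1,
      min_eq_right (le_trans (Nat.le_succ n) hk)]
    have hnR : (0 : ℝ) < (n : ℝ) := by exact_mod_cast hn
    congr 1
    field_simp
    ring
end

section
/- Let f(x) = min_{s=1,...,n} x_s on the box {x ∈ ℝ^n : 0 ≤ x ≤ 1}. For any k points x^1,...,x^k in the box and weights α_j ≥ 0 with Σ_{j=1}^k α_j = 1, one has f(Σ_{j=1}^k α_j x^j) − Σ_{j=1}^k α_j f(x^j) ≤ ((k−1)/k)·(1 − Σ_{j=1}^k α_j f(x^j)) ≤ (k−1)/k. -/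
/-- For `f(x) = min_s x_s` on the box `0 ≤ x ≤ 1`, any convex combination of `k`
points satisfies
`f(Σ αⱼ xʲ) − Σ αⱼ f(xʲ) ≤ ((k−1)/k)(1 − Σ αⱼ f(xʲ)) ≤ (k−1)/k`. -/
theorem min_combination_bound (n k : ℕ) (hn : 0 < n) (hk : 0 < k)
    (x : Fin k → Fin n → ℝ) (hx : ∀ j s, 0 ≤ x j s ∧ x j s ≤ 1)
    (α : Fin k → ℝ) (hα : ∀ j, 0 ≤ α j) (hαsum : ∑ j, α j = 1) :
    (⨅ s, ∑ j, α j * x j s) - (∑ j, α j * ⨅ s, x j s) ≤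
      ((k : ℝ) - 1) / (k : ℝ) * (1 - ∑ j, α j * ⨅ s, x j s) ∧
    ((k : ℝ) - 1) / (k : ℝ) * (1 - ∑ j, α j * ⨅ s, x j s) ≤ ((k : ℝ) - 1) / (k : ℝ) := by
  haveI : Nonempty (Fin n) := ⟨⟨0, hn⟩⟩
  haveI : Nonempty (Fin k) := ⟨⟨0, hk⟩⟩
  set M : Fin k → ℝ := fun j => ⨅ s, x j s with hM
  have hbdd : ∀ j, BddBelow (Set.range (x j)) := fun j =>
    (Set.finite_range (x j)).bddBelow
  have hM0 : ∀ j, 0 ≤ M j := fun j => le_ciInf (fun s => (hx j s).1)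
  have hM1 : ∀ j, M j ≤ 1 := fun j =>
    le_trans (ciInf_le (hbdd j) (Classical.arbitrary _)) (hx j (Classical.arbitrary _)).2
  set A : ℝ := ∑ j, α j * M j with hA
  have hA0 : 0 ≤ A := Finset.sum_nonneg fun j _ => mul_nonneg (hα j) (hM0 j)
  have hA1 : A ≤ 1 := by
    rw [hA, ← hαsum]
    exact Finset.sum_le_sum fun j _ => by
      nlinarith [hα j, hM0 j, hM1 j]
  have hkpos : (0:ℝ) < k := by exact_mod_cast hk
  -- pick j0 maximizing α j * (1 - M j)
  obtain ⟨j0, -, hj0⟩ := Finset.exists_max_image Finset.univ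
    (fun j => α j * (1 - M j)) ⟨Classical.arbitrary _, Finset.mem_univ _⟩
  have ht0 : (1 - A) / k ≤ α j0 * (1 - M j0) := by
    rw [div_le_iff₀ hkpos]
    have h1 : ∑ j, α j * (1 - M j) = (∑ j, α j) - ∑ j, α j * M j := by
      rw [← Finset.sum_sub_distrib]
      exact Finset.sum_congr rfl fun j _ => by ring
    have h2 : 1 - A = ∑ j, α j * (1 - M j) := by rw [h1, hαsum]
    rw [h2]
    calc ∑ j, α j * (1 - M j) ≤ ∑ _j : Fin k, α j0 * (1 - M j0) :=
          Finset.sum_le_sum fun j _ => hj0 j (Finset.mem_univ j)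
      _ = k * (α j0 * (1 - M j0)) := by
          rw [Finset.sum_const, Finset.card_univ, Fintype.card_fin, nsmul_eq_mul]
      _ = α j0 * (1 - M j0) * k := by ring
  -- pick s0 minimizing x j0
  obtain ⟨s0, -, hs0⟩ := Finset.exists_min_image Finset.univ (x j0)
    ⟨Classical.arbitrary _, Finset.mem_univ _⟩
  have hmin : x j0 s0 ≤ M j0 := le_ciInf fun s => hs0 s (Finset.mem_univ s)
  have hstep : (⨅ s, ∑ j, α j * x j s) ≤ 1 - α j0 * (1 - M j0) := by
    refine le_trans (ciInf_le (Set.finite_range _).bddBelow s0) ?_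
    have hle : ∀ j ∈ Finset.univ, α j * x j s0 ≤
        (if j = j0 then α j0 * M j0 else α j) := by
      intro j _
      by_cases h : j = j0
      · subst h; simp only [if_pos rfl]
        exact mul_le_mul_of_nonneg_left hmin (hα j)
      · simp only [if_neg h]
        nlinarith [hα j, (hx j s0).1, (hx j s0).2]
    refine le_trans (Finset.sum_le_sum hle) ?_
    have h3 : ∑ j, (if j = j0 then α j0 * M j0 else α j)
        = ∑ j, (α j + if j = j0 then α j0 * M j0 - α j0 else 0) :=
      Finset.sum_congr rfl fun j _ => by
        by_cases h : j = j0
        · subst h; simp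
        · simp [h]
    rw [h3, Finset.sum_add_distrib, Finset.sum_ite_eq' Finset.univ j0
      (fun _ => α j0 * M j0 - α j0), hαsum]
    simp only [Finset.mem_univ, if_true]; ring_nf; nlinarith [hα j0, hM0 j0, hM1 j0]
  constructor
  · have : 1 - α j0 * (1 - M j0) ≤ 1 - (1 - A) / k := by linarith
    have hfinal : (⨅ s, ∑ j, α j * x j s) ≤ 1 - (1 - A) / k := le_trans hstep this
    have heq : ((k : ℝ) - 1) / k * (1 - A) = (1 - A) - (1 - A) / k := by
      field_simp
    linarith [hfinal, heq]
  · have h1 : 0 ≤ ((k:ℝ) - 1) / k := by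
      apply div_nonneg _ (le_of_lt hkpos)
      have : (1:ℝ) ≤ k := by exact_mod_cast hk
      linarith
    nlinarith [hA0]
end

section
/- Let g(x) = −log(max_{s=1,...,n} x_s) on {x ∈ ℝ^n : x ≥ 0, x ≠ 0}. For any k points x^1,...,x^k in this region and weights α_j > 0 with Σ_{j=1}^k α_j = 1, one has g(Σ_{j=1}^k α_j x^j) ≤ −Σ_{j=1}^k α_j log α_j + Σ_{j=1}^k α_j g(x^j) ≤ log k + Σ_{j=1}^k α_j g(x^j). -/
/-- For `g(x) = −log(max_s x_s)` on `{x ≥ 0, x ≠ 0}`, any convex combination of `k`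
points with strictly positive weights satisfies
`g(Σ αⱼ xʲ) ≤ −Σ αⱼ log αⱼ + Σ αⱼ g(xʲ) ≤ log k + Σ αⱼ g(xʲ)`. -/
theorem neg_log_max_combination_bound (n k : ℕ) (hn : 0 < n) (hk : 0 < k)
    (x : Fin k → Fin n → ℝ) (hx : ∀ j, (∀ s, 0 ≤ x j s) ∧ x j ≠ 0)
    (α : Fin k → ℝ) (hα : ∀ j, 0 < α j) (hαsum : ∑ j, α j = 1) :
    -Real.log (⨆ s, ∑ j, α j * x j s) ≤
      -(∑ j, α j * Real.log (α j)) + ∑ j, α j * (-Real.log (⨆ s, x j s)) ∧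
    -(∑ j, α j * Real.log (α j)) + ∑ j, α j * (-Real.log (⨆ s, x j s)) ≤
      Real.log k + ∑ j, α j * (-Real.log (⨆ s, x j s)) := by
  have hnne : Nonempty (Fin n) := ⟨⟨0, hn⟩⟩
  set M : Fin k → ℝ := fun j => ⨆ s, x j s with hM
  set S : ℝ := ⨆ s, ∑ j, α j * x j s with hS
  -- each M j is positive
  have hMpos : ∀ j, 0 < M j := by
    intro j
    obtain ⟨s, hs⟩ := Function.ne_iff.mp (hx j).2
    have : 0 < x j s := lt_of_le_of_ne ((hx j).1 s) (Ne.symm hs)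
    exact lt_of_lt_of_le this (le_ciSup (Set.Finite.bddAbove (Set.finite_range _)) s)
  -- α j * M j ≤ S
  have key : ∀ j, α j * M j ≤ S := by
    intro j
    obtain ⟨s0, hs0⟩ := Finite.exists_max (x j)
    have h1 : M j ≤ x j s0 := ciSup_le hs0
    have h2 : α j * x j s0 ≤ ∑ j', α j' * x j' s0 :=
      Finset.single_le_sum (f := fun j' => α j' * x j' s0)
        (fun i _ => mul_nonneg (hα i).le ((hx i).1 s0)) (Finset.mem_univ j)
    have h3 : (∑ j', α j' * x j' s0) ≤ S :=
      le_ciSup (f := fun s => ∑ j', α j' * x j' s)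
        (Set.Finite.bddAbove (Set.finite_range _)) s0
    calc α j * M j ≤ α j * x j s0 := by
          exact mul_le_mul_of_nonneg_left h1 (hα j).le
      _ ≤ S := h2.trans h3
  have hSpos : 0 < S :=
    lt_of_lt_of_le (mul_pos (hα ⟨0, hk⟩) (hMpos ⟨0, hk⟩)) (key ⟨0, hk⟩)
  -- log step
  have hlog : ∀ j, Real.log (α j) + Real.log (M j) ≤ Real.log S := by
    intro j
    rw [← Real.log_mul (hα j).ne' (hMpos j).ne']
    exact Real.log_le_log (mul_pos (hα j) (hMpos j)) (key j)
  have first : ∑ j, α j * (Real.log (α j) + Real.log (M j)) ≤ Real.log S := by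
    calc ∑ j, α j * (Real.log (α j) + Real.log (M j))
        ≤ ∑ j, α j * Real.log S := by
          apply Finset.sum_le_sum
          intro j _
          exact mul_le_mul_of_nonneg_left (hlog j) (hα j).le
      _ = Real.log S := by rw [← Finset.sum_mul, hαsum, one_mul]
  constructor
  · have := first
    simp only [mul_add] at this
    rw [Finset.sum_add_distrib] at this
    have h4 : ∀ j, α j * (-Real.log (M j)) = -(α j * Real.log (M j)) := fun j => by ring
    simp only [show ∀ j, α j * (-Real.log (⨆ s, x j s)) = -(α j * Real.log (M j)) from h4]
    have e1 : ∑ j, -(α j * Real.log (α j)) = -(∑ j, α j * Real.log (α j)) :=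
      Finset.sum_neg_distrib _
    have e2 : ∑ j, -(α j * Real.log (M j)) = -(∑ j, α j * Real.log (M j)) :=
      Finset.sum_neg_distrib _
    linarith
  · -- entropy bound: -∑ α log α ≤ log k
    have hent : -(∑ j, α j * Real.log (α j)) ≤ Real.log k := by
      have hconc := strictConcaveOn_log_Ioi.concaveOn
      have hj := hconc.le_map_sum (t := Finset.univ) (w := α) (p := fun j => (α j)⁻¹)
        (fun i _ => (hα i).le) hαsum
        (fun i _ => Set.mem_Ioi.mpr (inv_pos.mpr (hα i)))
      simp only [smul_eq_mul] at hj
      have hsum : ∑ j, α j * (α j)⁻¹ = (k : ℝ) := by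
        have : ∀ j ∈ Finset.univ, α j * (α j)⁻¹ = 1 := fun j _ =>
          mul_inv_cancel₀ (hα j).ne'
        rw [Finset.sum_congr rfl this]
        simp
      rw [hsum] at hj
      have : ∑ j, α j * Real.log (α j)⁻¹ = -(∑ j, α j * Real.log (α j)) := by
        rw [← Finset.sum_neg_distrib]
        apply Finset.sum_congr rfl
        intro j _
        rw [Real.log_inv]; ring
      linarith [hj, this.symm.le, this.le]
    linarith
end

section
/- For 0 < σ ≤ 1 define H(x;σ) = Π_{s=1}^n (‖x‖₁ − x_s + σ)/(‖x‖₁ + σ) for x ∈ ℝ^n with x ≥ 0, where ‖x‖₁ = Σ_s x_s. Then for any vectors x and y in the region 0 ≤ x, y ≤ σ (componentwise), y ≤ x implies H(y;σ) ≥ H(x;σ). -/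
open Finset

/-- Key sum bound: `∑_{t ≠ s} z t / (R + σ - z t + c) ≤ 1` where `R = ∑_{t ≠ s} z t`. -/
lemma H_antitone_key_sum {n : ℕ} (σ : ℝ) (hσ0 : 0 < σ) (s : Fin n) (z : Fin n → ℝ)
    (hz : ∀ t, 0 ≤ z t ∧ z t ≤ σ) (c : ℝ) (hc : 0 ≤ c) :
    ∑ t ∈ univ.erase s, z t / ((∑ u ∈ univ.erase s, z u) + σ - z t + c) ≤ 1 := by
  set R : ℝ := ∑ u ∈ univ.erase s, z u with hR
  have hR0 : 0 ≤ R := Finset.sum_nonneg fun t _ => (hz t).1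
  rcases eq_or_lt_of_le hR0 with h0 | hpos
  · have hz0 : ∀ t ∈ univ.erase s, z t = 0 :=
      (Finset.sum_eq_zero_iff_of_nonneg (fun t _ => (hz t).1)).1 h0.symm
    have : ∑ t ∈ univ.erase s, z t / (R + σ - z t + c) = 0 :=
      Finset.sum_eq_zero fun t ht => by rw [hz0 t ht]; simp
    rw [this]; norm_num
  · have hle : ∀ t ∈ univ.erase s, z t / (R + σ - z t + c) ≤ z t / R := by
      intro t ht
      have hzt : z t ≤ R := Finset.single_le_sum (fun u _ => (hz u).1) ht
      gcongr
      · exact (hz t).1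
      · linarith [(hz t).2]
    calc ∑ t ∈ univ.erase s, z t / (R + σ - z t + c)
        ≤ ∑ t ∈ univ.erase s, z t / R := Finset.sum_le_sum hle
      _ = R / R := by rw [← Finset.sum_div]
      _ = 1 := div_self (ne_of_gt hpos)

/-- Single-coordinate step: lowering one coordinate increases `H`. -/
lemma H_antitone_step {n : ℕ} (σ : ℝ) (hσ0 : 0 < σ) (z : Fin n → ℝ)
    (hz : ∀ t, 0 ≤ z t ∧ z t ≤ σ) (s : Fin n) (b : ℝ) (hb0 : 0 ≤ b) (hbz : b ≤ z s) :
    ∏ t, ((∑ u, z u) - z t + σ) / ((∑ u, z u) + σ) ≤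
      ∏ t, ((∑ u, Function.update z s b u) - Function.update z s b t + σ) /
        ((∑ u, Function.update z s b u) + σ) := by
  have hn : 1 ≤ n := Nat.one_le_iff_ne_zero.2 (by rintro rfl; exact s.elim0)
  set R : ℝ := ∑ u ∈ univ.erase s, z u with hR
  have hR0 : 0 ≤ R := Finset.sum_nonneg fun t _ => (hz t).1
  -- the one-variable function
  set f : ℝ → ℝ := fun c => ((R + σ) * ∏ t ∈ univ.erase s, (R + σ - z t + c)) / (R + σ + c) ^ n
    with hf
  -- representation of H at an updated vector
  have hrep : ∀ c : ℝ,
      (∏ t, ((∑ u, Function.update z s c u) - Function.update z s c t + σ) /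
        ((∑ u, Function.update z s c u) + σ)) = f c := by
    intro c
    have hsum : (∑ u, Function.update z s c u) = R + c := by
      rw [Finset.sum_update_of_mem (mem_univ s), hR, Finset.erase_eq]; ring
    rw [hsum]
    rw [Finset.prod_div_distrib, Finset.prod_const, Finset.card_univ, Fintype.card_fin]
    rw [← Finset.mul_prod_erase univ _ (mem_univ s), Function.update_self]
    have h1 : (∏ t ∈ univ.erase s, (R + c - Function.update z s c t + σ)) =
        ∏ t ∈ univ.erase s, (R + σ - z t + c) := by
      refine Finset.prod_congr rfl fun t ht => ?_
      rw [Function.update_of_ne (Finset.ne_of_mem_erase ht)]; ring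
    rw [h1, hf]
    have : R + c - c + σ = R + σ := by ring
    rw [this]
    have : R + c + σ = R + σ + c := by ring
    rw [this]
  -- positivity facts
  have hFpos : ∀ c : ℝ, 0 ≤ c → ∀ t ∈ univ.erase s, 0 < R + σ - z t + c := by
    intro c hc t ht
    have hzt : z t ≤ R := Finset.single_le_sum (fun u _ => (hz u).1) ht
    linarith
  have hDpos : ∀ c : ℝ, 0 ≤ c → 0 < R + σ + c := fun c hc => by linarith
  -- derivative
  set f' : ℝ → ℝ := fun c =>
    ((R + σ) * (∑ t ∈ univ.erase s, (∏ u ∈ (univ.erase s).erase t, (R + σ - z u + c)) * 1)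
        * (R + σ + c) ^ n
      - (R + σ) * (∏ t ∈ univ.erase s, (R + σ - z t + c))
        * (↑n * (R + σ + c) ^ (n - 1) * 1)) / ((R + σ + c) ^ n) ^ 2 with hf'
  have hder : ∀ c : ℝ, 0 ≤ c → HasDerivAt f (f' c) c := by
    intro c hc
    have hnum : HasDerivAt (fun c => (R + σ) * ∏ t ∈ univ.erase s, (R + σ - z t + c))
        ((R + σ) * ∑ t ∈ univ.erase s,
          (∏ u ∈ (univ.erase s).erase t, (R + σ - z u + c)) * 1) c := by
      refine HasDerivAt.const_mul _ ?_
      have := HasDerivAt.fun_finsetProd (u := univ.erase s)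
        (f := fun t c => R + σ - z t + c) (f' := fun _ => (1 : ℝ)) (x := c)
        (fun t _ => (hasDerivAt_id c).const_add (R + σ - z t))
      simpa [smul_eq_mul] using this
    have hden : HasDerivAt (fun c => (R + σ + c) ^ n) (↑n * (R + σ + c) ^ (n - 1) * 1) c :=
      ((hasDerivAt_id c).const_add (R + σ)).pow n
    have hdne : (R + σ + c) ^ n ≠ 0 := pow_ne_zero _ (ne_of_gt (hDpos c hc))
    exact hnum.div hden hdne
  -- derivative is nonpositive
  have hderiv_nonpos : ∀ c : ℝ, 0 ≤ c → f' c ≤ 0 := by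
    intro c hc
    set D : ℝ := R + σ + c with hD
    have hDp : 0 < D := hDpos c hc
    set P : ℝ := ∏ t ∈ univ.erase s, (R + σ - z t + c) with hP
    have hPp : 0 < P := Finset.prod_pos (hFpos c hc)
    set S : ℝ := ∑ t ∈ univ.erase s, (∏ u ∈ (univ.erase s).erase t, (R + σ - z u + c)) * 1
      with hS
    -- S * D ≤ n * P
    have hkey : S * D ≤ (n : ℝ) * P := by
      have hprod : ∀ t ∈ univ.erase s,
          (∏ u ∈ (univ.erase s).erase t, (R + σ - z u + c)) = P / (R + σ - z t + c) := by
        intro t ht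
        rw [eq_div_iff (ne_of_gt (hFpos c hc t ht)), hP]
        exact Finset.prod_erase_mul _ _ ht
      have hSD : S * D = P * ∑ t ∈ univ.erase s, D / (R + σ - z t + c) := by
        rw [hS, Finset.sum_mul, Finset.mul_sum]
        refine Finset.sum_congr rfl fun t ht => ?_
        rw [hprod t ht]
        field_simp
      rw [hSD]
      have hsum : ∑ t ∈ univ.erase s, D / (R + σ - z t + c) ≤ (n : ℝ) := by
        have hsplit : ∀ t ∈ univ.erase s,
            D / (R + σ - z t + c) = 1 + z t / (R + σ - z t + c) := by
          intro t ht
          have hFt := hFpos c hc t ht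
          field_simp [hD]
          ring
        rw [Finset.sum_congr rfl hsplit, Finset.sum_add_distrib, Finset.sum_const,
          Finset.card_erase_of_mem (mem_univ s), Finset.card_univ, Fintype.card_fin]
        have h1 := H_antitone_key_sum σ hσ0 s z hz c hc
        have hcast : ((n - 1 : ℕ) : ℝ) = (n : ℝ) - 1 := by
          rw [Nat.cast_sub hn]; norm_num
        simp only [nsmul_eq_mul, mul_one]
        rw [hcast]
        linarith
      calc P * ∑ t ∈ univ.erase s, D / (R + σ - z t + c)
          ≤ P * (n : ℝ) := by
            exact mul_le_mul_of_nonneg_left hsum (le_of_lt hPp)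
        _ = (n : ℝ) * P := mul_comm _ _
    -- conclude
    rw [hf']
    apply div_nonpos_of_nonpos_of_nonneg
    · have hDn : D ^ n = D ^ (n - 1) * D := by
        conv_lhs => rw [← Nat.sub_add_cancel hn]
        rw [pow_succ]
      have hDn1 : 0 < D ^ (n - 1) := pow_pos hDp _
      have : (R + σ) * S * D ^ n = (R + σ) * D ^ (n - 1) * (S * D) := by rw [hDn]; ring
      have h2 : (R + σ) * P * ((n : ℝ) * D ^ (n - 1) * 1) =
          (R + σ) * D ^ (n - 1) * ((n : ℝ) * P) := by ring
      have hRσ : 0 ≤ (R + σ) * D ^ (n - 1) := by positivity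
      nlinarith [mul_le_mul_of_nonneg_left hkey hRσ]
    · positivity
  -- antitone on [0, σ]
  have hanti : AntitoneOn f (Set.Icc 0 σ) := by
    apply antitoneOn_of_deriv_nonpos (convex_Icc 0 σ)
    · exact fun c hc => ((hder c hc.1).continuousAt).continuousWithinAt
    · rw [interior_Icc]
      exact fun c hc => ((hder c hc.1.le).differentiableAt).differentiableWithinAt
    · rw [interior_Icc]
      intro c hc
      rw [(hder c hc.1.le).deriv]
      exact hderiv_nonpos c hc.1.le
  have hzs : z s ∈ Set.Icc 0 σ := ⟨(hz s).1, (hz s).2⟩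
  have hbm : b ∈ Set.Icc 0 σ := ⟨hb0, le_trans hbz (hz s).2⟩
  have hmain := hanti hbm hzs hbz
  have hz_eq : (∏ t, ((∑ u, z u) - z t + σ) / ((∑ u, z u) + σ)) = f (z s) := by
    rw [← hrep (z s), Function.update_eq_self]
  rw [hz_eq, hrep b]
  exact hmain

/-- Monotonicity of `H(x;σ) = Π_s (‖x‖₁ − x_s + σ)/(‖x‖₁ + σ)`: on the region
`0 ≤ x ≤ σ`, if `y ≤ x` componentwise, then `H(y;σ) ≥ H(x;σ)`. -/
theorem H_antitone (n : ℕ) (σ : ℝ) (hσ0 : 0 < σ) (hσ1 : σ ≤ 1)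
    (x y : Fin n → ℝ) (hx : ∀ s, 0 ≤ x s ∧ x s ≤ σ) (hy : ∀ s, 0 ≤ y s ∧ y s ≤ σ)
    (hyx : ∀ s, y s ≤ x s) :
    ∏ s, ((∑ t, x t) - x s + σ) / ((∑ t, x t) + σ) ≤
      ∏ s, ((∑ t, y t) - y s + σ) / ((∑ t, y t) + σ) := by
  classical
  set w : Finset (Fin n) → Fin n → ℝ := fun T t => if t ∈ T then y t else x t with hw
  have main : ∀ T : Finset (Fin n),
      (∏ s, ((∑ t, x t) - x s + σ) / ((∑ t, x t) + σ)) ≤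
        ∏ s, ((∑ t, w T t) - w T s + σ) / ((∑ t, w T t) + σ) := by
    intro T
    induction T using Finset.induction_on with
    | empty => simp [hw]
    | @insert a T ha ih =>
      have hwa : w (insert a T) = Function.update (w T) a (y a) := by
        funext t
        by_cases h : t = a
        · subst h; simp [hw, Function.update_self]
        · simp [hw, Function.update_of_ne h, Finset.mem_insert, h]
      have hwz : ∀ t, 0 ≤ w T t ∧ w T t ≤ σ := by
        intro t
        by_cases h : t ∈ T <;> simp [hw, h]
        · exact hy t
        · exact hx t
      have hya : y a ≤ w T a := by simp [hw, ha]; exact hyx a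
      rw [hwa]
      exact le_trans ih (H_antitone_step σ hσ0 (w T) hwz a (y a) (hy a).1 hya)
  have := main univ
  simpa [hw] using this
end

section
/- For 0 < σ ≤ 1 define H(x;σ) = Π_{s=1}^n (‖x‖₁ − x_s + σ)/(‖x‖₁ + σ) for x ∈ ℝ^n with 0 ≤ x ≤ 1 componentwise. Then σ·H(x;1) ≤ H(x;σ) ≤ H(x;1). -/
/-- Weierstrass product inequality: `∏ (1 - ε s) ≥ 1 - ∑ ε s` for `ε s ∈ [0,1]`. -/
lemma weier_aux {n : ℕ} (ε : Fin n → ℝ) (h0 : ∀ s, 0 ≤ ε s) (h1 : ∀ s, ε s ≤ 1) :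
    ∀ t : Finset (Fin n), 1 - ∑ s ∈ t, ε s ≤ ∏ s ∈ t, (1 - ε s) := by
  intro t
  induction t using Finset.induction with
  | empty => simp
  | @insert a t ha ih =>
    rw [Finset.sum_insert ha, Finset.prod_insert ha]
    have hP : (0:ℝ) ≤ ∏ s ∈ t, (1 - ε s) :=
      Finset.prod_nonneg fun s _ => by linarith [h1 s]
    have hsum : (0:ℝ) ≤ ∑ s ∈ t, ε s := Finset.sum_nonneg fun s _ => h0 s
    nlinarith [h0 a, h1 a, mul_nonneg (h0 a) hsum,
      mul_le_mul_of_nonneg_left ih (by linarith [h1 a] : (0:ℝ) ≤ 1 - ε a)]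

/-- For `H(x;σ) = Π_s (‖x‖₁ − x_s + σ)/(‖x‖₁ + σ)` and `0 ≤ x ≤ 1` componentwise:
`σ·H(x;1) ≤ H(x;σ) ≤ H(x;1)`. -/
theorem H_sigma_bounds (n : ℕ) (σ : ℝ) (hσ0 : 0 < σ) (hσ1 : σ ≤ 1)
    (x : Fin n → ℝ) (hx : ∀ s, 0 ≤ x s ∧ x s ≤ 1) :
    σ * ∏ s, ((∑ t, x t) - x s + 1) / ((∑ t, x t) + 1) ≤
      ∏ s, ((∑ t, x t) - x s + σ) / ((∑ t, x t) + σ) ∧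
    ∏ s, ((∑ t, x t) - x s + σ) / ((∑ t, x t) + σ) ≤
      ∏ s, ((∑ t, x t) - x s + 1) / ((∑ t, x t) + 1) := by
  set S : ℝ := ∑ t, x t with hS
  have hS0 : 0 ≤ S := Finset.sum_nonneg fun s _ => (hx s).1
  have hxS : ∀ s, x s ≤ S := fun s =>
    Finset.single_le_sum (fun t _ => (hx t).1) (Finset.mem_univ s)
  have hSσ : 0 < S + σ := by linarith
  have hS1 : 0 < S + 1 := by linarith
  have hnum : ∀ s, 0 ≤ S - x s := fun s => by linarith [hxS s]
  constructor
  · -- lower bound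
    set ε : Fin n → ℝ := fun s => (1 - σ) * x s / ((S - x s + 1) * (S + σ)) with hε
    have hε0 : ∀ s, 0 ≤ ε s := fun s => by
      apply div_nonneg
      · exact mul_nonneg (by linarith) (hx s).1
      · exact mul_nonneg (by linarith [hnum s]) hSσ.le
    have hε1 : ∀ s, ε s ≤ 1 := fun s => by
      rw [hε, div_le_one (by nlinarith [hnum s])]
      nlinarith [(hx s).1, (hx s).2, hnum s, hxS s]
    have hfac : ∀ s : Fin n, (S - x s + σ) / (S + σ)
        = (S - x s + 1) / (S + 1) * (1 - ε s) := fun s => by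
      have h1 : S - x s + 1 > 0 := by linarith [hnum s]
      rw [hε]
      field_simp
      ring
    have hprod : ∏ s, (S - x s + σ) / (S + σ)
        = (∏ s, (S - x s + 1) / (S + 1)) * ∏ s, (1 - ε s) := by
      rw [← Finset.prod_mul_distrib]
      exact Finset.prod_congr rfl fun s _ => hfac s
    have hsumε : ∑ s, ε s ≤ (1 - σ) * S / (S + σ) := by
      have h1 : ∀ s : Fin n, ε s ≤ (1 - σ) * x s / (S + σ) := fun s => by
        rw [hε]
        apply div_le_div_of_nonneg_left (mul_nonneg (by linarith) (hx s).1) hSσ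
        nlinarith [hnum s]
      calc ∑ s, ε s ≤ ∑ s, (1 - σ) * x s / (S + σ) := Finset.sum_le_sum fun s _ => h1 s
        _ = (1 - σ) * S / (S + σ) := by
            rw [hS, ← Finset.sum_div, ← Finset.mul_sum]
    have hW : σ ≤ ∏ s, (1 - ε s) := by
      have := weier_aux ε hε0 hε1 Finset.univ
      have h2 : σ ≤ 1 - (1 - σ) * S / (S + σ) := by
        rw [le_sub_iff_add_le, ← sub_nonneg]
        have h3 : 1 - (σ + (1 - σ) * S / (S + σ)) = ((1 - σ) * σ) / (S + σ) := by
          field_simp; ring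
        rw [h3]
        exact div_nonneg (mul_nonneg (by linarith) hσ0.le) hSσ.le
      linarith [hsumε]
    have hP1 : 0 ≤ ∏ s, (S - x s + 1) / (S + 1) :=
      Finset.prod_nonneg fun s _ => div_nonneg (by linarith [hnum s]) hS1.le
    rw [hprod, mul_comm σ]
    exact mul_le_mul_of_nonneg_left hW hP1
  · -- upper bound
    apply Finset.prod_le_prod
    · intro s _
      exact div_nonneg (by linarith [hnum s]) hSσ.le
    · intro s _
      rw [div_le_div_iff₀ hSσ hS1]
      nlinarith [(hx s).1, hnum s]
end

section
/- For i = 1,...,n let f_i : ℝ^{n_i} → ℝ ∪ {+∞} be proper and lower semi-continuous with bounded domain, let A_i be m × n_i real matrices and b ∈ ℝ^m. Define the perturbation function v : ℝ^m → ℝ ∪ {±∞} by v(z) = inf { Σ_{i=1}^n f_i(x^i) : Σ_{i=1}^n A_i x^i ≤ b + z }. Then v is lower semi-continuous. -/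
open Filter Topology

private lemma ereal_sum_ne_bot {ι : Type*} (s : Finset ι) (g : ι → EReal)
    (h : ∀ i ∈ s, g i ≠ ⊥) : ∑ i ∈ s, g i ≠ ⊥ := by
  classical
  induction' s using Finset.induction_on with a t hi ih
  case empty => simp
  case insert =>
    rw [Finset.sum_insert hi]
    simp only [ne_eq, EReal.add_eq_bot_iff, not_or]
    exact ⟨h a (Finset.mem_insert_self a t), ih fun i hit => h i (Finset.mem_insert_of_mem hit)⟩

private lemma ereal_sum_ne_top {ι : Type*} (s : Finset ι) (g : ι → EReal)
    (hb : ∀ i ∈ s, g i ≠ ⊥) (h : ∑ i ∈ s, g i ≠ ⊤) : ∀ i ∈ s, g i ≠ ⊤ := by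
  classical
  intro i hi hitop
  apply h
  rw [← Finset.add_sum_erase s g hi, hitop]
  have : ∑ j ∈ s.erase i, g j ≠ ⊥ :=
    ereal_sum_ne_bot _ _ fun j hj => hb j (Finset.mem_of_mem_erase hj)
  rw [add_comm]
  exact EReal.add_top_of_ne_bot this

private lemma lsc_sum_ereal {α : Type*} [TopologicalSpace α] {ι : Type*} (s : Finset ι)
    (g : ι → α → EReal) (hb : ∀ i ∈ s, ∀ x, g i x ≠ ⊥)
    (h : ∀ i ∈ s, LowerSemicontinuous (g i)) :
    LowerSemicontinuous (fun x => ∑ i ∈ s, g i x) := by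
  classical
  induction' s using Finset.induction_on with a t hi ih
  case empty => simpa using lowerSemicontinuous_const
  case insert =>
    simp only [Finset.sum_insert hi]
    refine LowerSemicontinuous.add' (h a (Finset.mem_insert_self a t))
      (ih (fun i hit x => hb i (Finset.mem_insert_of_mem hit) x)
        (fun i hit => h i (Finset.mem_insert_of_mem hit))) ?_
    intro x
    refine EReal.continuousAt_add (Or.inr ?_) (Or.inl ?_)
    · exact ereal_sum_ne_bot _ _ fun i hit => hb i (Finset.mem_insert_of_mem hit) x
    · exact hb a (Finset.mem_insert_self a t) x

/-- The perturbation function `v(z) = inf {Σ fᵢ(xⁱ) : Σ Aᵢ xⁱ ≤ b + z}` of a separable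
problem with proper lower semicontinuous objectives with bounded domains is lower
semicontinuous. -/
theorem perturbation_lsc (m n : ℕ) (ni : Fin n → ℕ)
    (f : ∀ i : Fin n, (Fin (ni i) → ℝ) → EReal)
    (hbot : ∀ i x, f i x ≠ ⊥) (hproper : ∀ i, ∃ x, f i x ≠ ⊤)
    (hlsc : ∀ i, LowerSemicontinuous (f i))
    (hbdd : ∀ i, Bornology.IsBounded {x | f i x ≠ ⊤})
    (A : ∀ i : Fin n, Matrix (Fin m) (Fin (ni i)) ℝ) (b : Fin m → ℝ)
    (v : (Fin m → ℝ) → EReal)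
    (hv : ∀ z, v z = sInf {c : EReal | ∃ x : ∀ i : Fin n, Fin (ni i) → ℝ,
      (∀ j, (∑ i, (A i).mulVec (x i)) j ≤ b j + z j) ∧ c = ∑ i, f i (x i)}) :
    LowerSemicontinuous v := by
  classical
  intro z₀ c hc
  by_contra hcon
  rw [Filter.not_eventually] at hcon
  obtain ⟨z, hz, hzp⟩ := Filter.exists_seq_forall_of_frequently hcon
  obtain ⟨c', hcc', hc'v⟩ := exists_between hc
  have hc'top : c' ≠ ⊤ := (hc'v.trans_le le_top).ne
  -- pick almost minimizers
  have hex : ∀ k, ∃ x : ∀ i : Fin n, Fin (ni i) → ℝ,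
      (∀ j, (∑ i, (A i).mulVec (x i)) j ≤ b j + z k j) ∧ ∑ i, f i (x i) < c' := by
    intro k
    have h1 : v (z k) < c' := lt_of_le_of_lt (not_lt.1 (hzp k)) hcc'
    rw [hv (z k)] at h1
    obtain ⟨a, ⟨x, hfe, rfl⟩, ha⟩ := sInf_lt_iff.1 h1
    exact ⟨x, hfe, ha⟩
  choose x hfe hflt using hex
  -- the compact set
  set K : Set (∀ i : Fin n, Fin (ni i) → ℝ) :=
    Set.pi Set.univ (fun i => closure {y | f i y ≠ ⊤}) with hK
  have hKc : IsCompact K := isCompact_univ_pi fun i => (hbdd i).isCompact_closure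
  have hxK : ∀ k, x k ∈ K := by
    intro k i _
    have hne : f i (x k i) ≠ ⊤ := by
      have := ereal_sum_ne_top Finset.univ (fun i => f i (x k i))
        (fun i _ => hbot i (x k i)) ((hflt k).trans_le le_top).ne i (Finset.mem_univ i)
      exact this
    exact subset_closure hne
  obtain ⟨xb, hxbK, φ, hφ, hxt⟩ := hKc.tendsto_subseq hxK
  -- feasibility at the limit
  have hfeas : ∀ j, (∑ i, (A i).mulVec (xb i)) j ≤ b j + z₀ j := by
    intro j
    have hcont : Continuous fun (y : ∀ i : Fin n, Fin (ni i) → ℝ) =>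
        (∑ i, (A i).mulVec (y i)) j := by
      simp only [Finset.sum_apply, Matrix.mulVec, dotProduct]
      exact continuous_finset_sum _ fun i _ => continuous_finset_sum _ fun l _ =>
        (continuous_const.mul ((continuous_apply l).comp (continuous_apply i)))
    refine le_of_tendsto_of_tendsto'
      ((hcont.continuousAt.tendsto.comp hxt))
      (((continuous_apply j).continuousAt.tendsto.comp (hz.comp hφ.tendsto_atTop)).const_add (b j))
      (fun k => hfe (φ k) j)
  -- g is lsc
  have hg : LowerSemicontinuous (fun (y : ∀ i : Fin n, Fin (ni i) → ℝ) => ∑ i, f i (y i)) := by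
    refine lsc_sum_ereal Finset.univ (fun i (y : ∀ i : Fin n, Fin (ni i) → ℝ) => f i (y i)) (fun i _ y => hbot i (y i))
      (fun i _ => ?_)
    exact LowerSemicontinuous.comp (hlsc i) (continuous_apply i)
  -- value at the limit
  have hgxb : ∑ i, f i (xb i) ≤ c' := by
    by_contra hlt
    push_neg at hlt
    have hev : ∀ᶠ k in atTop, c' < ∑ i, f i (x (φ k) i) :=
      hxt.eventually (hg xb c' hlt)
    obtain ⟨k, hk⟩ := hev.exists
    exact absurd (hflt (φ k)) (not_lt.2 hk.le)
  have : v z₀ ≤ c' := by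
    rw [hv z₀]
    exact le_trans (sInf_le ⟨xb, hfeas, rfl⟩) hgxb
  exact absurd (this.trans_lt hc'v).false (by simp)
end

section
/- Let N and L be positive integers and let k_1,...,k_N be integers with 1 ≤ k_i ≤ L+1 for all i and Σ_{i=1}^N k_i ≤ N + L. Then Σ_{i=1}^N (k_i − 1)/k_i ≤ min{N,L} · L/(L + min{N,L}). -/
lemma tangent_aux (x c : ℝ) (hx : 0 < x) (hc : 0 < c) :
    (x - 1) / x ≤ 1 - 2/c + x / c^2 := by
  have h : (1 - 2/c + x / c^2) - (x - 1) / x = (x - c)^2 / (c^2 * x) := by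
    field_simp; ring
  have h2 : 0 ≤ (x - c)^2 / (c^2 * x) :=
    div_nonneg (sq_nonneg _) (by positivity)
  linarith [h ▸ h2]

/-- If `1 ≤ kᵢ ≤ L+1` and `Σ_{i=1}^N kᵢ ≤ N + L`, then
`Σᵢ (kᵢ−1)/kᵢ ≤ min{N,L} · L/(L + min{N,L})`. -/
theorem sum_frac_bound (N L : ℕ) (hN : 0 < N) (hL : 0 < L) (k : Fin N → ℕ)
    (hk : ∀ i, 1 ≤ k i ∧ k i ≤ L + 1) (hsum : ∑ i, k i ≤ N + L) :
    ∑ i, ((k i : ℝ) - 1) / (k i : ℝ) ≤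
      (min N L : ℝ) * (L : ℝ) / ((L : ℝ) + (min N L : ℝ)) := by
  have hk1 : ∀ i, (1:ℝ) ≤ (k i : ℝ) := fun i => by exact_mod_cast (hk i).1
  have hkpos : ∀ i, (0:ℝ) < (k i : ℝ) := fun i => lt_of_lt_of_le one_pos (hk1 i)
  have hNpos : (0:ℝ) < N := by exact_mod_cast hN
  have hLpos : (0:ℝ) < L := by exact_mod_cast hL
  have hS : (∑ i, (k i : ℝ)) ≤ (N:ℝ) + L := by
    push_cast [← Nat.cast_sum]
    exact_mod_cast hsum
  rcases le_or_gt N L with h | h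
  · have hmin : (min N L : ℝ) = (N:ℝ) := by
      exact min_eq_left (by exact_mod_cast h)
    rw [hmin]
    set c : ℝ := ((N:ℝ) + L) / N with hc
    have hcpos : 0 < c := by positivity
    have step1 : ∑ i, ((k i : ℝ) - 1) / (k i : ℝ) ≤
        ∑ i, (1 - 2/c + (k i : ℝ) / c^2) :=
      Finset.sum_le_sum fun i _ => tangent_aux _ _ (hkpos i) hcpos
    have step2 : ∑ i, (1 - 2/c + (k i : ℝ) / c^2)
        = (N:ℝ) * (1 - 2/c) + (∑ i, (k i : ℝ)) / c^2 := by
      rw [Finset.sum_add_distrib, Finset.sum_const, Finset.card_univ,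
        ← Finset.sum_div]
      simp [Fintype.card_fin]
    have step3 : (∑ i, (k i : ℝ)) / c^2 ≤ ((N:ℝ) + L) / c^2 :=
      div_le_div_of_nonneg_right hS (by positivity) |>.trans_eq rfl
    have step4 : (N:ℝ) * (1 - 2/c) + ((N:ℝ) + L) / c^2
        = (N:ℝ) * L / (L + N) := by
      rw [hc]
      field_simp
      ring
    calc ∑ i, ((k i : ℝ) - 1) / (k i : ℝ)
        ≤ (N:ℝ) * (1 - 2/c) + (∑ i, (k i : ℝ)) / c^2 := step1.trans_eq step2
      _ ≤ (N:ℝ) * (1 - 2/c) + ((N:ℝ) + L) / c^2 := by linarith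
      _ = (N:ℝ) * L / (L + N) := step4
  · have hmin : (min N L : ℝ) = (L:ℝ) := by
      exact min_eq_right (by exact_mod_cast h.le)
    rw [hmin]
    have step1 : ∑ i, ((k i : ℝ) - 1) / (k i : ℝ) ≤
        ∑ i, ((k i : ℝ) - 1) / 2 := by
      refine Finset.sum_le_sum fun i _ => ?_
      rcases eq_or_lt_of_le (hk i).1 with h1 | h1
      · simp [← h1]
      · have h2 : (2:ℝ) ≤ (k i : ℝ) := by exact_mod_cast h1
        exact div_le_div_of_nonneg_left (by linarith [hk1 i]) two_pos h2
    have step2 : ∑ i, ((k i : ℝ) - 1) / 2 = ((∑ i, (k i : ℝ)) - N) / 2 := by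
      rw [← Finset.sum_div, Finset.sum_sub_distrib, Finset.sum_const,
        Finset.card_univ]
      simp [Fintype.card_fin]
    have : ((∑ i, (k i : ℝ)) - N) / 2 ≤ (L:ℝ) / 2 := by linarith
    have hfin : (L:ℝ) * L / (L + L) = L / 2 := by
      field_simp; ring
    rw [hfin]
    linarith [step1.trans_eq step2]
end

section
/- Let N and L be positive integers and let k_1,...,k_N be integers with 1 ≤ k_i ≤ L+1 for all i and Σ_{i=1}^N k_i ≤ N + L. Then Σ_{i=1}^N log k_i ≤ min{N,L} · log(1 + L/min{N,L}). -/
/-- If `1 ≤ kᵢ ≤ L+1` and `Σ_{i=1}^N kᵢ ≤ N + L`, then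
`Σᵢ log kᵢ ≤ min{N,L} · log(1 + L/min{N,L})`. -/
theorem sum_log_bound (N L : ℕ) (hN : 0 < N) (hL : 0 < L) (k : Fin N → ℕ)
    (hk : ∀ i, 1 ≤ k i ∧ k i ≤ L + 1) (hsum : ∑ i, k i ≤ N + L) :
    ∑ i, Real.log (k i) ≤
      (min N L : ℝ) * Real.log (1 + (L : ℝ) / (min N L : ℝ)) := by
  set m : ℕ := min N L with hm
  have hm0 : 0 < m := lt_min hN hL
  have hmN : m ≤ N := min_le_left _ _
  have hmL : m ≤ L := min_le_right _ _
  have hcastmin : ((N:ℝ) ⊓ (L:ℝ)) = (m:ℝ) := by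
    rw [hm]; push_cast; rfl
  rw [show (min (N:ℝ) (L:ℝ)) = (m:ℝ) from hcastmin]
  set S : Finset (Fin N) := Finset.univ.filter (fun i => 2 ≤ k i) with hSdef
  -- each i contributes at least 1, and i ∈ S contributes at least 2
  have hlow : N + S.card ≤ ∑ i, k i := by
    have hsplit : ∑ i, k i = ∑ i ∈ S, k i + ∑ i ∈ Sᶜ, k i :=
      (Finset.sum_add_sum_compl S _).symm
    have h1 : 2 * S.card ≤ ∑ i ∈ S, k i := by
      calc 2 * S.card = ∑ _i ∈ S, 2 := by rw [Finset.sum_const, smul_eq_mul, mul_comm]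
        _ ≤ ∑ i ∈ S, k i := Finset.sum_le_sum (fun i hi => by
            simp only [hSdef, Finset.mem_filter] at hi; exact hi.2)
    have h2 : Sᶜ.card ≤ ∑ i ∈ Sᶜ, k i := by
      simpa using Finset.sum_le_sum (fun i (_ : i ∈ Sᶜ) => (hk i).1)
    have hcards : S.card + Sᶜ.card = N := by
      simpa using Finset.card_add_card_compl S
    omega
  have hScard : S.card ≤ m := by
    have : S.card ≤ L := by omega
    exact le_min (le_trans (Finset.card_le_card (Finset.filter_subset _ _)) (by simp)) this
  obtain ⟨T, hST, hTuniv, hTcard⟩ :=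
    Finset.exists_subsuperset_card_eq S.subset_univ hScard (by simpa using hmN)
  -- outside T, k i = 1
  have hout : ∀ i ∉ T, k i = 1 := by
    intro i hi
    have hiS : i ∉ S := fun h => hi (hST h)
    simp only [hSdef, Finset.mem_filter, Finset.mem_univ, true_and, not_le] at hiS
    have := (hk i).1; omega
  -- sum over T bound
  have hTsum : ∑ i ∈ T, k i ≤ m + L := by
    have : ∑ i, k i = ∑ i ∈ T, k i + ∑ i ∈ Tᶜ, k i :=
      (Finset.sum_add_sum_compl T _).symm
    have hcomp : Tᶜ.card ≤ ∑ i ∈ Tᶜ, k i := by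
      simpa using Finset.sum_le_sum (fun i (_ : i ∈ Tᶜ) => (hk i).1)
    have hcards : T.card + Tᶜ.card = N := by
      simpa using Finset.card_add_card_compl T
    omega
  -- reduce total sum of logs to sum over T
  have hred : ∑ i, Real.log (k i) = ∑ i ∈ T, Real.log (k i) := by
    refine (Finset.sum_subset T.subset_univ (fun i _ hi => ?_)).symm
    rw [hout i hi]; simp
  rw [hred]
  -- Jensen
  have hjensen := strictConcaveOn_log_Ioi.concaveOn.le_map_sum
    (t := T) (w := fun _ => (m : ℝ)⁻¹) (p := fun i => (k i : ℝ))
    (fun i _ => by positivity)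
    (by
      rw [Finset.sum_const, hTcard, nsmul_eq_mul]
      field_simp)
    (fun i _ => by
      have := (hk i).1
      simp only [Set.mem_Ioi]
      exact_mod_cast Nat.lt_of_lt_of_le Nat.zero_lt_one this)
  simp only [smul_eq_mul] at hjensen
  simp only [← Finset.mul_sum] at hjensen
  have hmR : (0:ℝ) < (m:ℝ) := by exact_mod_cast hm0
  have key : ∑ i ∈ T, Real.log (k i) ≤ (m:ℝ) * Real.log ((m:ℝ)⁻¹ * ∑ i ∈ T, (k i : ℝ)) := by
    have := mul_le_mul_of_nonneg_left hjensen hmR.le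
    rw [← mul_assoc, mul_inv_cancel₀ hmR.ne', one_mul] at this
    exact this
  refine key.trans ?_
  have harg : (m:ℝ)⁻¹ * ∑ i ∈ T, (k i : ℝ) ≤ 1 + (L:ℝ)/(m:ℝ) := by
    have hsumR : (∑ i ∈ T, (k i : ℝ)) ≤ (m:ℝ) + (L:ℝ) := by
      push_cast [← Nat.cast_sum]
      exact_mod_cast hTsum
    rw [inv_mul_le_iff₀ hmR]
    calc (∑ i ∈ T, (k i : ℝ)) ≤ (m:ℝ) + (L:ℝ) := hsumR
      _ = (m:ℝ) * (1 + (L:ℝ)/(m:ℝ)) := by field_simp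
  have hpos : (0:ℝ) < (m:ℝ)⁻¹ * ∑ i ∈ T, (k i : ℝ) := by
    have hne : T.Nonempty := Finset.card_pos.mp (by omega)
    have : (0:ℝ) < ∑ i ∈ T, (k i : ℝ) :=
      Finset.sum_pos (fun i _ => by exact_mod_cast (hk i).1) hne
    positivity
  exact mul_le_mul_of_nonneg_left (Real.log_le_log hpos harg) hmR.le
end

section
/- Let m, n be positive integers and let f_1,...,f_n be proper functions with ρ(f_1) ≥ ρ(f_2) ≥ ... ≥ ρ(f_n), where each ρ(f_i) is finite. For any integers k_1,...,k_n with 1 ≤ k_i ≤ m+1 for all i and Σ_{i=1}^n k_i ≤ m + n, one has Σ_{i=1}^n ρ^{k_i}(f_i) ≤ Σ_{i=1}^{min{m,n}} ρ(f_i). -/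
lemma esub_self {x : EReal} (h1 : x ≠ ⊤) (h2 : x ≠ ⊥) : x - x = 0 := by
  lift x to ℝ using ⟨h1, h2⟩
  exact_mod_cast sub_self x

lemma rhoK_one_eq_zero {E : Type*} [AddCommMonoid E] [Module ℝ E] (f : E → EReal)
    (hbot : ∀ x, f x ≠ ⊥) (hproper : ∃ x, f x ≠ ⊤) : rhoK 1 f = 0 := by
  obtain ⟨x0, hx0⟩ := hproper
  have hset : {d : EReal | ∃ (x : Fin 1 → E) (α : Fin 1 → ℝ),
      (∀ j, f (x j) ≠ ⊤) ∧ (∀ j, 0 ≤ α j) ∧ (∑ j, α j) = 1 ∧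
      d = f (∑ j, α j • x j) - ∑ j, (α j : EReal) * f (x j)} = {0} := by
    ext dd
    constructor
    · rintro ⟨x, α, htop, hα, hsum1, rfl⟩
      have hα0 : α 0 = 1 := by simpa [Fin.sum_univ_one] using hsum1
      simp only [Fin.sum_univ_one, hα0, one_smul, EReal.coe_one, one_mul, Set.mem_singleton_iff]
      exact esub_self (htop 0) (hbot (x 0))
    · rintro rfl
      refine ⟨fun _ => x0, fun _ => 1, fun _ => hx0, fun _ => zero_le_one, by simp, ?_⟩
      simp only [Fin.sum_univ_one, one_smul, EReal.coe_one, one_mul]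
      exact (esub_self hx0 (hbot x0)).symm
  rw [rhoK, hset, sSup_singleton]

lemma rhoK_le_rho {E : Type*} [AddCommMonoid E] [Module ℝ E] (k : ℕ) (f : E → EReal) :
    rhoK k f ≤ rho f := le_iSup (fun k => rhoK k f) k

lemma rho_nonneg {E : Type*} [AddCommMonoid E] [Module ℝ E] (f : E → EReal)
    (hbot : ∀ x, f x ≠ ⊥) (hproper : ∃ x, f x ≠ ⊤) : 0 ≤ rho f := by
  rw [← rhoK_one_eq_zero f hbot hproper]; exact rhoK_le_rho 1 f

lemma sum_antitone_le {n c : ℕ} (g : Fin n → EReal) (hg0 : ∀ i, 0 ≤ g i)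
    (hmono : ∀ i j : Fin n, i ≤ j → g j ≤ g i) (S : Finset (Fin n)) (hc : S.card ≤ c) :
    ∑ i ∈ S, g i ≤ ∑ i ∈ Finset.univ.filter (fun i : Fin n => (i : ℕ) < c), g i := by
  have hcard : S.card ≤ n := le_trans (Finset.card_le_univ S) (by simp)
  set t := S.card with ht
  let e : Fin t ↪o Fin n := S.orderEmbOfFin rfl
  have hstep1 : ∑ i ∈ S, g i = ∑ j : Fin t, g (e j) := by
    refine (Finset.sum_bij (fun (j : Fin t) _ => e j) ?_ ?_ ?_ ?_).symm
    · intro j _; exact Finset.orderEmbOfFin_mem S rfl j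
    · intro a _ b _ hab; exact e.injective hab
    · intro b hb
      have : (b : Fin n) ∈ Set.range (S.orderEmbOfFin rfl) := by
        rw [Finset.range_orderEmbOfFin]; exact hb
      obtain ⟨j, hj⟩ := this
      exact ⟨j, Finset.mem_univ j, hj⟩
    · intro j _; rfl
  have key : ∀ r : ℕ, (h : r < t) → r ≤ ((e ⟨r, h⟩ : Fin n) : ℕ) := by
    intro r
    induction r with
    | zero => intro h; exact Nat.zero_le _
    | succ r ih =>
      intro h
      have h' : r < t := Nat.lt_of_succ_lt h
      have hlt : e ⟨r, h'⟩ < e ⟨r + 1, h⟩ := e.strictMono (by simp [Fin.lt_def])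
      have h2 := ih h'
      rw [Fin.lt_def] at hlt
      omega
  have hstep2 : ∑ j : Fin t, g (e j) ≤ ∑ j : Fin t, g (Fin.castLE hcard j) := by
    refine Finset.sum_le_sum fun j _ => hmono _ _ ?_
    rw [Fin.le_def]
    simpa using key j.1 j.2
  have hstep3 : ∑ j : Fin t, g (Fin.castLE hcard j)
      = ∑ i ∈ Finset.univ.image (Fin.castLE hcard), g i := by
    rw [Finset.sum_image (fun a _ b _ hab => Fin.castLE_injective hcard hab)]
  have hsub : Finset.univ.image (Fin.castLE hcard)
      ⊆ Finset.univ.filter (fun i : Fin n => (i : ℕ) < c) := by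
    intro i hi
    simp only [Finset.mem_image, Finset.mem_univ, true_and] at hi
    obtain ⟨j, rfl⟩ := hi
    simp only [Finset.mem_filter, Finset.mem_univ, true_and, Fin.coe_castLE]
    exact lt_of_lt_of_le j.2 hc
  calc ∑ i ∈ S, g i = ∑ j : Fin t, g (e j) := hstep1
    _ ≤ ∑ j : Fin t, g (Fin.castLE hcard j) := hstep2
    _ = ∑ i ∈ Finset.univ.image (Fin.castLE hcard), g i := hstep3
    _ ≤ _ := Finset.sum_le_sum_of_subset_of_nonneg hsub (fun i _ _ => hg0 i)

/-- If `ρ(f₁) ≥ ρ(f₂) ≥ ... ≥ ρ(fₙ)` are finite and `1 ≤ kᵢ ≤ m+1` with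
`Σ kᵢ ≤ m + n`, then `Σᵢ ρ^{kᵢ}(fᵢ) ≤ Σ_{i < min{m,n}} ρ(fᵢ)`. -/
theorem sum_rhoK_le_sum_rho (m n : ℕ) (hm : 0 < m) (hn : 0 < n)
    (d : Fin n → ℕ) (f : ∀ i : Fin n, (Fin (d i) → ℝ) → EReal)
    (hbot : ∀ i x, f i x ≠ ⊥) (hproper : ∀ i, ∃ x, f i x ≠ ⊤)
    (hfin : ∀ i, rho (f i) ≠ ⊤ ∧ rho (f i) ≠ ⊥)
    (hsorted : ∀ i j : Fin n, i ≤ j → rho (f j) ≤ rho (f i))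
    (k : Fin n → ℕ) (hk : ∀ i, 1 ≤ k i ∧ k i ≤ m + 1) (hsum : ∑ i, k i ≤ m + n) :
    ∑ i, rhoK (k i) (f i) ≤
      ∑ i ∈ Finset.univ.filter (fun i : Fin n => (i : ℕ) < min m n), rho (f i) := by
  set S := Finset.univ.filter (fun i : Fin n => 2 ≤ k i) with hS
  have hzero : ∀ i ∉ S, rhoK (k i) (f i) = 0 := by
    intro i hi
    have hki : k i = 1 := by
      simp only [hS, Finset.mem_filter, Finset.mem_univ, true_and, not_le] at hi
      have := (hk i).1; omega
    rw [hki]; exact rhoK_one_eq_zero _ (hbot i) (hproper i)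
  have h1 : ∑ i, rhoK (k i) (f i) = ∑ i ∈ S, rhoK (k i) (f i) :=
    (Finset.sum_subset (Finset.subset_univ S) (fun i _ hi => hzero i hi)).symm
  have h2 : ∑ i ∈ S, rhoK (k i) (f i) ≤ ∑ i ∈ S, rho (f i) :=
    Finset.sum_le_sum fun i _ => rhoK_le_rho _ _
  have heq : ∑ i, (k i - 1 + 1) = ∑ i, k i :=
    Finset.sum_congr rfl (fun i _ => by have := (hk i).1; omega)
  rw [Finset.sum_add_distrib] at heq
  simp only [Finset.sum_const, Finset.card_univ, Fintype.card_fin, smul_eq_mul, mul_one] at heq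
  have hsum1 : ∑ i, (k i - 1) ≤ m := by omega
  have hcardm : S.card ≤ m := by
    calc S.card = ∑ i ∈ S, 1 := by rw [Finset.card_eq_sum_ones]
      _ ≤ ∑ i ∈ S, (k i - 1) := Finset.sum_le_sum (fun i hi => by
          simp only [hS, Finset.mem_filter, Finset.mem_univ, true_and] at hi; omega)
      _ ≤ ∑ i, (k i - 1) := Finset.sum_le_sum_of_subset (Finset.subset_univ S)
      _ ≤ m := hsum1
  have hcardn : S.card ≤ n := le_trans (Finset.card_le_univ S) (by simp)
  have h3 := sum_antitone_le (fun i => rho (f i))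
    (fun i => rho_nonneg _ (hbot i) (hproper i)) hsorted S (le_min hcardm hcardn)
  rw [h1]
  exact le_trans h2 h3
end
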